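/- arXiv:1606.05268 — 3 statements merged into one kernel-verified Lean document; each statement's English description precedes it below -/
import Mathlib

section
/- Let q ≥ 2 and let m be an integer with m ≥ 5 or m = 3. Then W(ζ_α) = 0 for every α ∈ P∖P_2, and the family {ζ_α : α ∈ P∖P_2} is a basis of Ker W over ℚ. -/
/-- Partitions of `Fin m` are represented as finsets of finsets. -/
abbrev Ptn (m : ℕ) := Finset (Finset (Fin m))

/-- `α` is a partition of `Fin m`: all classes are nonempty and every element
belongs to exactly one class. -/
def IsPartition {m : ℕ} (α : Ptn m) : Prop :=
  (∀ c ∈ α, c.Nonempty) ∧ ∀ i : Fin m, ∃! c, c ∈ α ∧ i ∈ c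

/-- `P`: the set of partitions of `M = Fin m` into at most `q` nonempty classes. -/
def Pset (m q : ℕ) : Set (Ptn m) :=
  {α | IsPartition α ∧ α.card ≤ q}

/-- `P₂`: the partitions of the form `{{i,j}, M ∖ {i,j}}` for 2-element subsets `{i,j}`. -/
def P2set (m : ℕ) : Set (Ptn m) :=
  {α | ∃ p : Finset (Fin m), p.card = 2 ∧ α = {p, pᶜ}}

/-- `O` as a set: the 2-element subsets of `M = Fin m`. -/
def Oset (m : ℕ) : Set (Finset (Fin m)) := {p | p.card = 2}

/-- `O` as a type: the 2-element subsets of `M = Fin m`. -/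
abbrev OO (m : ℕ) := {p : Finset (Fin m) // p.card = 2}

/-- `P` as a type. -/
abbrev PP (m q : ℕ) := {α : Ptn m // α ∈ Pset m q}

noncomputable instance (m q : ℕ) : Fintype (PP m q) := Fintype.ofFinite _

/-- The canonical action of `S(M)` on partitions: `g({c₁,…,cₜ}) = {g(c₁),…,g(cₜ)}`. -/
def permPart {m : ℕ} (g : Equiv.Perm (Fin m)) (α : Ptn m) : Ptn m :=
  α.image fun c => c.image g

/-- The canonical action of `S(M)` on subsets of `M`. -/
def permPair {m : ℕ} (g : Equiv.Perm (Fin m)) (p : Finset (Fin m)) : Finset (Fin m) :=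
  p.image g

/-- `H` is closed under the action `act` on `S` if every `g` that maps each
`H`-orbit of `S` onto itself belongs to `H`. -/
def ClosedUnder {m : ℕ} {X : Type*} (act : Equiv.Perm (Fin m) → X → X) (S : Set X)
    (H : Set (Equiv.Perm (Fin m))) : Prop :=
  ∀ g : Equiv.Perm (Fin m), (∀ x ∈ S, ∃ h ∈ H, act g x = act h x) → g ∈ H

section Code

variable {m n : ℕ} {A : Type*} [Fintype A] [DecidableEq A]

/-- A map `h : Aⁿ → Aⁿ` is monomial if `h(a) = (σ₁(a_{π(1)}), …, σₙ(a_{π(n)}))`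
for a permutation `π ∈ Sₙ` and permutations `σ₁,…,σₙ` of `A`. -/
def IsMonomial (h : (Fin n → A) → (Fin n → A)) : Prop :=
  ∃ (π : Equiv.Perm (Fin n)) (σ : Fin n → Equiv.Perm A),
    ∀ (a : Fin n → A) (k : Fin n), h a k = σ k (a (π k))

/-- `Iso(C)`: the permutations `g` of the messages such that `λ ∘ g ∘ λ⁻¹` is a
Hamming isometry of the code encoded by `lam`. -/
def IsoSet (lam : Fin m → Fin n → A) : Set (Equiv.Perm (Fin m)) :=
  {g | ∀ i j : Fin m, hammingDist (lam (g i)) (lam (g j)) = hammingDist (lam i) (lam j)}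

/-- `Mon(C)`: the elements of `Iso(C)` such that `λ ∘ g ∘ λ⁻¹` extends to a
monomial map of `Aⁿ`. -/
def MonSet (lam : Fin m → Fin n → A) : Set (Equiv.Perm (Fin m)) :=
  {g | g ∈ IsoSet lam ∧
    ∃ h : (Fin n → A) → (Fin n → A), IsMonomial h ∧ ∀ i : Fin m, h (lam i) = lam (g i)}

/-- `Ψ(x) = {x⁻¹(a) : a ∈ A} ∖ {∅}`, the partition of `M` induced by `x : M → A`. -/
def PsiF (x : Fin m → A) : Ptn m :=
  (Finset.univ.image fun a : A => Finset.univ.filter fun i : Fin m => x i = a).erase ∅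

/-- The multiplicity function `η_λ(α) = |{k : Ψ(λ_k) = α}|`. -/
def eta (lam : Fin m → Fin n → A) (α : Ptn m) : ℚ :=
  (((Finset.univ : Finset (Fin n)).filter fun k => PsiF (fun i => lam i k) = α).card : ℚ)

/-- The multiplicity function, restricted to `P`. -/
def etaP (q : ℕ) (lam : Fin m → Fin n → A) : PP m q → ℚ := fun α => eta lam α.1

end Code

open Classical in
/-- `Δ_α({i,j}) = 0` if `i` and `j` lie in the same class of `α`, and `1` otherwise. -/
noncomputable def Delta {m q : ℕ} (α : PP m q) (p : OO m) : ℚ :=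
  if ∃ c ∈ α.1, p.1 ⊆ c then 0 else 1

/-- The linear map `W : F(P,ℚ) → F(O,ℚ)`, `W(η)(p) = Σ_{α∈P} η(α)Δ_α(p)`. -/
noncomputable def WLin (m q : ℕ) : (PP m q → ℚ) →ₗ[ℚ] (OO m → ℚ) where
  toFun η := fun p => ∑ α : PP m q, η α * Delta α p
  map_add' x y := by
    funext p
    simp [add_mul, Finset.sum_add_distrib]
  map_smul' c x := by
    funext p
    simp [Finset.mul_sum, mul_assoc]

/-- The matrix `B`: `B_{p,t} = 1` if `|p ∩ t| = 1`, and `0` otherwise. -/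
def Bmat (m : ℕ) : Matrix (OO m) (OO m) ℚ :=
  Matrix.of fun p t => if (p.1 ∩ t.1).card = 1 then 1 else 0

/-- The matrix `D`: `2(m−2)(m−4)·D_{p,t}` equals `−m²+8m−14` if `p = t`,
`m−4` if `|p∩t| = 1`, and `−2` if `p ∩ t = ∅`. -/
def Dmat (m : ℕ) : Matrix (OO m) (OO m) ℚ :=
  Matrix.of fun p t =>
    (if p = t then -(m : ℚ) ^ 2 + 8 * m - 14
      else if (p.1 ∩ t.1).card = 1 then (m : ℚ) - 4 else -2) /
      (2 * ((m : ℚ) - 2) * ((m : ℚ) - 4))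

/-- `ξ_x = Σ_{r∈O} x(r) Σ_{p∈O} D_{r,p} · id_{{p, M∖p}}`. -/
noncomputable def xi (m q : ℕ) (x : OO m → ℚ) : PP m q → ℚ := fun α =>
  ∑ r : OO m, x r * ∑ p : OO m, Dmat m r p * (if α.1 = ({p.1, p.1ᶜ} : Ptn m) then 1 else 0)

/-- `ζ_α = id_α − ξ_{Δ_α}`. -/
noncomputable def zeta (m q : ℕ) (α : PP m q) : PP m q → ℚ :=
  (fun β => if β = α then 1 else 0) - xi m q fun p => Delta α p

/-- `V₀`: the functions in `F(P,ℚ)` vanishing on `P ∖ P₂`. -/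
def V0 (m q : ℕ) : Set (PP m q → ℚ) :=
  {η | ∀ α : PP m q, (α : Ptn m) ∉ P2set m → η α = 0}

open Classical in
/-- `id_{P₂} = Σ_{α∈P₂} id_α`. -/
noncomputable def idP2 (m q : ℕ) : PP m q → ℚ := fun α =>
  if (α : Ptn m) ∈ P2set m then 1 else 0

theorem permPart_mem_Pset {m q : ℕ} (g : Equiv.Perm (Fin m)) {α : Ptn m}
    (hα : α ∈ Pset m q) : permPart g α ∈ Pset m q := by
  obtain ⟨⟨hne, huniq⟩, hcard⟩ := hα
  refine ⟨⟨?_, ?_⟩, le_trans Finset.card_image_le hcard⟩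
  · intro c hc
    simp only [permPart, Finset.mem_image] at hc
    obtain ⟨d, hd, rfl⟩ := hc
    exact (hne d hd).image g
  · intro i
    obtain ⟨c, ⟨hc, hic⟩, hun⟩ := huniq (g.symm i)
    refine ⟨c.image g, ⟨?_, ?_⟩, ?_⟩
    · simp only [permPart, Finset.mem_image]
      exact ⟨c, hc, rfl⟩
    · exact Finset.mem_image.2 ⟨g.symm i, hic, g.apply_symm_apply i⟩
    · rintro d ⟨hd, hid⟩
      simp only [permPart, Finset.mem_image] at hd
      obtain ⟨e, he, rfl⟩ := hd
      rw [Finset.mem_image] at hid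
      obtain ⟨j, hj, hji⟩ := hid
      have hjs : j = g.symm i := by
        apply g.injective
        rw [hji, g.apply_symm_apply]
      subst hjs
      rw [hun e ⟨he, hj⟩]

/-- The action of `S(M)` on `P`. -/
def permPP {m q : ℕ} (g : Equiv.Perm (Fin m)) (α : PP m q) : PP m q :=
  ⟨permPart g α.1, permPart_mem_Pset g α.2⟩

/-- The action of `S(M)` on `F(P,ℚ)`: `g(η)(α) = η(g⁻¹(α))`. -/
def permF {m q : ℕ} (g : Equiv.Perm (Fin m)) (η : PP m q → ℚ) : PP m q → ℚ :=
  fun α => η (permPP g⁻¹ α)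

/-- `Stab(η) = {g ∈ S(M) : g(η) = η}`. -/
def StabSet {m q : ℕ} (η : PP m q → ℚ) : Set (Equiv.Perm (Fin m)) :=
  {g | permF g η = η}

/-- `Stab_W(η) = {g ∈ S(M) : W(g(η)) = W(η)}`. -/
def StabWSet (m q : ℕ) (η : PP m q → ℚ) : Set (Equiv.Perm (Fin m)) :=
  {g | WLin m q (permF g η) = WLin m q η}

section ZetaBasisAux
open Finset
variable {m : ℕ}

lemma pair_inter_of_mem {t : Finset (Fin m)} {u x : Fin m} (hu : u ∈ t) (hx : x ∉ t) :
    ({u, x} : Finset (Fin m)) ∩ t = {u} := by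
  ext y
  simp only [mem_inter, mem_insert, mem_singleton]
  constructor
  · rintro ⟨rfl | rfl, hyt⟩
    · rfl
    · exact absurd hyt hx
  · rintro rfl; exact ⟨Or.inl rfl, hu⟩

lemma exists_of_inter_card_one {r t : Finset (Fin m)} (hr : r.card = 2)
    (h : (r ∩ t).card = 1) :
    ∃ u x, u ≠ x ∧ r = {u, x} ∧ u ∈ t ∧ x ∉ t := by
  obtain ⟨u, hu⟩ := card_eq_one.mp h
  obtain ⟨a, b, hab, rfl⟩ := card_eq_two.mp hr
  have hur : u ∈ ({a, b} : Finset (Fin m)) ∩ t := hu ▸ mem_singleton_self u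
  have hut : u ∈ t := (mem_inter.mp hur).2
  have humem : u = a ∨ u = b := by
    have := (mem_inter.mp hur).1; simpa using this
  have key : ∀ x : Fin m, x ∈ ({a,b} : Finset (Fin m)) → x ≠ u → x ∉ t := by
    intro x hxr hxu hxt
    have : x ∈ ({a,b} : Finset (Fin m)) ∩ t := mem_inter.mpr ⟨hxr, hxt⟩
    rw [hu, mem_singleton] at this
    exact hxu this
  rcases humem with rfl | rfl
  · exact ⟨u, b, hab, rfl, hut, key b (by simp) (fun h => hab h.symm)⟩
  · refine ⟨u, a, fun h => hab h.symm, ?_, hut, key a (by simp) hab⟩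
    exact (Finset.pair_comm a u)

/-- generic product count -/

lemma count_prod (A B : Finset (Fin m)) (hAB : Disjoint A B)
    (P : Finset (Fin m) → Prop) [DecidablePred P]
    (hP : ∀ r, P r ↔ ∃ u ∈ A, ∃ v ∈ B, r = {u, v}) :
    (univ.filter P).card = A.card * B.card := by
  rw [← card_product]
  symm
  apply Finset.card_bij (fun a _ => ({a.1, a.2} : Finset (Fin m)))
  · rintro ⟨u, v⟩ huv
    simp only [mem_product] at huv
    simp only [mem_filter, mem_univ, true_and, hP]
    exact ⟨u, huv.1, v, huv.2, rfl⟩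
  · rintro ⟨u, v⟩ huv ⟨u', v'⟩ huv' h
    simp only [mem_product] at huv huv'
    have hu : u ∈ ({u', v'} : Finset (Fin m)) := h ▸ (by simp)
    have hv : v ∈ ({u', v'} : Finset (Fin m)) := h ▸ (by simp)
    have hu' : u = u' := by
      rcases mem_insert.mp hu with h1 | h1
      · exact h1
      · exfalso; rw [mem_singleton] at h1; subst h1
        exact (Finset.disjoint_left.mp hAB huv.1) huv'.2
    have hv' : v = v' := by
      rcases mem_insert.mp hv with h1 | h1
      · exfalso; subst h1
        exact (Finset.disjoint_left.mp hAB huv'.1) huv.2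
      · exact mem_singleton.mp h1
    simp [hu', hv']
  · intro r hr
    rw [mem_filter] at hr
    obtain ⟨u, hu, v, hv, rfl⟩ := (hP r).mp hr.2
    exact ⟨(u, v), mem_product.mpr ⟨hu, hv⟩, rfl⟩

lemma pair_of_mem {p : Finset (Fin m)} {a : Fin m} (hp : p.card = 2) (ha : a ∈ p) :
    ∃ b, b ≠ a ∧ p = {a, b} := by
  obtain ⟨x, y, hxy, rfl⟩ := card_eq_two.mp hp
  rcases (by simpa using ha : a = x ∨ a = y) with rfl | rfl
  · exact ⟨y, fun h => hxy h.symm, rfl⟩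
  · exact ⟨x, fun h => hxy h, pair_comm x a⟩

lemma inter_card_two {p r : Finset (Fin m)} (hp : p.card = 2) (hr : r.card = 2) :
    (p ∩ r).card = 2 ↔ p = r := by
  constructor
  · intro h
    have h1 : p ∩ r = p := eq_of_subset_of_card_le inter_subset_left (by omega)
    have h2 : p ⊆ r := h1 ▸ inter_subset_right
    exact eq_of_subset_of_card_le h2 (by omega)
  · rintro rfl; rw [inter_self, hp]

lemma count_meet (t : Finset (Fin m)) (ht : t.card = 2) :
    (univ.filter fun r : Finset (Fin m) => r.card = 2 ∧ (r ∩ t).card = 1).card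
      = 2 * (m - 2) := by
  classical
  rw [count_prod t tᶜ disjoint_compl_right _ ?_, ht, card_compl, ht, Fintype.card_fin]
  intro r
  constructor
  · rintro ⟨hr, h1⟩
    obtain ⟨u, x, hux, rfl, hut, hxt⟩ := exists_of_inter_card_one hr h1
    exact ⟨u, hut, x, mem_compl.mpr hxt, rfl⟩
  · rintro ⟨u, hu, v, hv, rfl⟩
    rw [mem_compl] at hv
    have hne : u ≠ v := fun h => hv (h ▸ hu)
    refine ⟨card_pair hne, ?_⟩
    rw [pair_inter_of_mem hu hv, card_singleton]

lemma count_N1_disj {p t : Finset (Fin m)} (hp : p.card = 2) (ht : t.card = 2)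
    (hpt : p ∩ t = ∅) :
    (univ.filter fun r : Finset (Fin m) =>
      r.card = 2 ∧ (p ∩ r).card = 1 ∧ (r ∩ t).card = 1).card = 4 := by
  classical
  have hd : Disjoint p t := disjoint_iff_inter_eq_empty.mpr hpt
  rw [count_prod p t hd _ ?_, hp, ht]
  intro r
  constructor
  · rintro ⟨hr, h1, h2⟩
    rw [inter_comm] at h1
    obtain ⟨u, x, hux, rfl, hup, hxp⟩ := exists_of_inter_card_one hr h1
    obtain ⟨v, hv⟩ := card_eq_one.mp h2
    have hvr : v ∈ ({u, x} : Finset (Fin m)) ∩ t := hv ▸ mem_singleton_self v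
    rw [mem_inter] at hvr
    have hvt : v ∈ t := hvr.2
    have hvx : v = x := by
      rcases (by simpa using hvr.1 : v = u ∨ v = x) with rfl | rfl
      · exact absurd hvt (disjoint_left.mp hd hup)
      · rfl
    exact ⟨u, hup, x, hvx ▸ hvt, rfl⟩
  · rintro ⟨u, hu, v, hv, rfl⟩
    have hvp : v ∉ p := disjoint_right.mp hd hv
    have hut : u ∉ t := disjoint_left.mp hd hu
    have hne : u ≠ v := fun h => hvp (h ▸ hu)
    refine ⟨card_pair hne, ?_, ?_⟩
    · rw [inter_comm, pair_inter_of_mem hu hvp, card_singleton]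
    · rw [pair_comm, pair_inter_of_mem hv hut, card_singleton]

lemma count_N0_disj {p t : Finset (Fin m)} (hp : p.card = 2) (ht : t.card = 2)
    (hpt : p ∩ t = ∅) :
    (univ.filter fun r : Finset (Fin m) =>
      r.card = 2 ∧ (p ∩ r).card = 0 ∧ (r ∩ t).card = 1).card = 2 * (m - 4) := by
  classical
  have hd : Disjoint p t := disjoint_iff_inter_eq_empty.mpr hpt
  have hd2 : Disjoint t (p ∪ t)ᶜ :=
    (disjoint_compl_right).mono_left subset_union_right
  rw [count_prod t (p ∪ t)ᶜ hd2 _ ?_, ht, card_compl, card_union_of_disjoint hd, hp, ht,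
    Fintype.card_fin]
  intro r
  constructor
  · rintro ⟨hr, h0, h1⟩
    obtain ⟨u, x, hux, rfl, hut, hxt⟩ := exists_of_inter_card_one hr h1
    rw [card_eq_zero] at h0
    have hxp : x ∉ p := fun hxp => by
      have : x ∈ p ∩ {u, x} := mem_inter.mpr ⟨hxp, by simp⟩
      simp [h0] at this
    exact ⟨u, hut, x, by simp [hxp, hxt], rfl⟩
  · rintro ⟨u, hu, v, hv, rfl⟩
    simp only [mem_compl, mem_union, not_or] at hv
    have hne : u ≠ v := fun h => hv.2 (h ▸ hu)
    refine ⟨card_pair hne, ?_, ?_⟩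
    · rw [card_eq_zero]
      have hup : u ∉ p := disjoint_right.mp hd hu
      ext y
      simp only [mem_inter, mem_insert, mem_singleton, notMem_empty, iff_false, not_and]
      rintro hyp (rfl | rfl)
      · exact hup hyp
      · exact hv.1 hyp
    · rw [pair_inter_of_mem hu hv.2, card_singleton]

lemma share_setup {p t : Finset (Fin m)} (hp : p.card = 2) (ht : t.card = 2)
    (hpt : (p ∩ t).card = 1) :
    ∃ a b c : Fin m, p = {a, b} ∧ t = {a, c} ∧ b ≠ a ∧ c ≠ a ∧ b ≠ c ∧
      b ∉ t ∧ c ∉ p := by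
  obtain ⟨a, ha⟩ := card_eq_one.mp hpt
  have hap : a ∈ p ∧ a ∈ t := mem_inter.mp (ha ▸ mem_singleton_self a)
  obtain ⟨b, hba, rfl⟩ := pair_of_mem hp hap.1
  obtain ⟨c, hca, rfl⟩ := pair_of_mem ht hap.2
  have hbt : b ∉ ({a, c} : Finset (Fin m)) := fun hbt => by
    have : b ∈ ({a, b} : Finset (Fin m)) ∩ {a, c} := mem_inter.mpr ⟨by simp, hbt⟩
    rw [ha, mem_singleton] at this
    exact hba this
  have hcp : c ∉ ({a, b} : Finset (Fin m)) := fun hcp => by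
    have : c ∈ ({a, b} : Finset (Fin m)) ∩ {a, c} := mem_inter.mpr ⟨hcp, by simp⟩
    rw [ha, mem_singleton] at this
    exact hca this
  have hbc : b ≠ c := fun h => hbt (h ▸ (by simp : c ∈ ({a,c} : Finset (Fin m))))
  exact ⟨a, b, c, rfl, rfl, hba, hca, hbc, hbt, hcp⟩

lemma count_N2 {p t : Finset (Fin m)} (hp : p.card = 2) :
    (univ.filter fun r : Finset (Fin m) =>
      r.card = 2 ∧ (p ∩ r).card = 2 ∧ (r ∩ t).card = 1).card
      = if (p ∩ t).card = 1 then 1 else 0 := by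
  classical
  by_cases h : (p ∩ t).card = 1
  · rw [if_pos h]
    rw [show (univ.filter fun r : Finset (Fin m) =>
        r.card = 2 ∧ (p ∩ r).card = 2 ∧ (r ∩ t).card = 1) = {p} from ?_, card_singleton]
    ext r
    simp only [mem_filter, mem_univ, true_and, mem_singleton]
    constructor
    · rintro ⟨h2, h22, _⟩; exact ((inter_card_two hp h2).mp h22).symm
    · rintro rfl
      exact ⟨hp, by rw [inter_self]; exact hp, h⟩
  · rw [if_neg h, card_eq_zero]
    apply filter_false_of_mem
    intro r _
    rintro ⟨h2, h22, h1⟩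
    rw [(inter_card_two hp h2).mp h22] at h
    exact h h1

lemma count_N0_share {p t : Finset (Fin m)} (hp : p.card = 2) (ht : t.card = 2)
    (hpt : (p ∩ t).card = 1) :
    (univ.filter fun r : Finset (Fin m) =>
      r.card = 2 ∧ (p ∩ r).card = 0 ∧ (r ∩ t).card = 1).card = m - 3 := by
  classical
  obtain ⟨a, b, c, rfl, rfl, hba, hca, hbc, hbt, hcp⟩ := share_setup hp ht hpt
  have hd : Disjoint ({c} : Finset (Fin m)) ({a, b, c} : Finset (Fin m))ᶜ := by
    simp [disjoint_left]
  rw [count_prod {c} ({a, b, c} : Finset (Fin m))ᶜ hd _ ?_, card_singleton, card_compl,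
    Fintype.card_fin]
  · have h3 : ({a, b, c} : Finset (Fin m)).card = 3 := by
      rw [card_insert_of_notMem (by simp [hba.symm, hca.symm]),
        card_insert_of_notMem (by simp [hbc]), card_singleton]
    rw [h3, one_mul]
  intro r
  constructor
  · rintro ⟨hr, h0, h1⟩
    obtain ⟨u, x, hux, rfl, hut, hxt⟩ := exists_of_inter_card_one hr h1
    rw [card_eq_zero] at h0
    have hnp : ∀ y, y ∈ ({u, x} : Finset (Fin m)) → y ∉ ({a, b} : Finset (Fin m)) := by
      intro y hy hyp
      have hmem : y ∈ ({a, b} : Finset (Fin m)) ∩ {u, x} := mem_inter.mpr ⟨hyp, hy⟩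
      rw [h0] at hmem
      exact notMem_empty y hmem
    have huc : u = c := by
      rcases (by simpa using hut : u = a ∨ u = c) with h | h
      · exact absurd (by simp [h] : u ∈ ({a, b} : Finset (Fin m))) (hnp u (by simp))
      · exact h
    refine ⟨u, by simp [huc], x, ?_, rfl⟩
    have hxa : x ≠ a := fun h => hnp x (by simp) (by simp [h])
    have hxb : x ≠ b := fun h => hnp x (by simp) (by simp [h])
    have hxc : x ≠ c := fun h => hxt (by simp [h])
    simp [hxa, hxb, hxc]
  · rintro ⟨u, hu, v, hv, rfl⟩
    rw [mem_singleton] at hu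
    simp only [mem_compl, mem_insert, mem_singleton, not_or] at hv
    obtain ⟨hva, hvb, hvc⟩ := hv
    have hne : u ≠ v := fun h => hvc (hu ▸ h : c = v).symm
    refine ⟨card_pair hne, ?_, ?_⟩
    · rw [card_eq_zero]
      ext y
      simp only [mem_inter, mem_insert, mem_singleton, notMem_empty, iff_false, not_and]
      rintro (rfl | rfl) (h | h)
      · exact hca ((h.trans hu).symm)
      · exact hva h.symm
      · exact hcp (by simp [← h.trans hu])
      · exact hvb h.symm
    · have hut : u ∈ ({a, c} : Finset (Fin m)) := by simp [hu]
      have hvt : v ∉ ({a, c} : Finset (Fin m)) := by simp [hva, hvc]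
      rw [pair_inter_of_mem hut hvt, card_singleton]

lemma count_N1_share {p t : Finset (Fin m)} (hp : p.card = 2) (ht : t.card = 2)
    (hpt : (p ∩ t).card = 1) :
    (univ.filter fun r : Finset (Fin m) =>
      r.card = 2 ∧ (p ∩ r).card = 1 ∧ (r ∩ t).card = 1).card = m - 2 := by
  classical
  obtain ⟨a, b, c, rfl, rfl, hba, hca, hbc, hbt, hcp⟩ := share_setup hp ht hpt
  have h3 : ({a, b, c} : Finset (Fin m)).card = 3 := by
    rw [card_insert_of_notMem (by simp [hba.symm, hca.symm]),
      card_insert_of_notMem (by simp [hbc]), card_singleton]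
  have hm3 : 3 ≤ m := by
    calc 3 = ({a, b, c} : Finset (Fin m)).card := h3.symm
    _ ≤ (univ : Finset (Fin m)).card := card_le_univ _
    _ = m := by rw [card_univ, Fintype.card_fin]
  have hd : Disjoint ({a} : Finset (Fin m)) ({a, b, c} : Finset (Fin m))ᶜ := by
    simp [disjoint_left]
  have hQ : (univ.filter fun r : Finset (Fin m) =>
      ∃ u ∈ ({a} : Finset (Fin m)), ∃ v ∈ ({a, b, c} : Finset (Fin m))ᶜ, r = {u, v}).card
      = m - 3 := by
    rw [count_prod _ _ hd _ (fun r => Iff.rfl), card_singleton, card_compl, Fintype.card_fin,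
      one_mul, h3]
  have hsplit : (univ.filter fun r : Finset (Fin m) =>
      r.card = 2 ∧ (({a, b} : Finset (Fin m)) ∩ r).card = 1 ∧ (r ∩ {a, c}).card = 1)
      = insert ({b, c} : Finset (Fin m)) (univ.filter fun r : Finset (Fin m) =>
        ∃ u ∈ ({a} : Finset (Fin m)), ∃ v ∈ ({a, b, c} : Finset (Fin m))ᶜ, r = {u, v}) := by
    ext r
    simp only [mem_filter, mem_univ, true_and, mem_insert, mem_singleton]
    constructor
    · rintro ⟨hr, h1, h2⟩
      obtain ⟨u, x, hux, rfl, hut, hxt⟩ := exists_of_inter_card_one hr h2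
      have hxa : x ≠ a := fun h => hxt (by simp [h])
      have hxc : x ≠ c := fun h => hxt (by simp [h])
      rcases (by simpa using hut : u = a ∨ u = c) with h | h
      · subst h
        right
        refine ⟨u, by simp, x, ?_, rfl⟩
        have hxb : x ≠ b := by
          intro hh
          rw [hh] at h1 hux
          have : ({u, b} : Finset (Fin m)) ∩ {u, b} = {u, b} := inter_self _
          rw [this, card_pair hux] at h1
          exact absurd h1 (by norm_num)
        simp only [mem_compl, mem_insert, mem_singleton]
        push_neg
        exact ⟨hxa, hxb, hxc⟩
      · subst h
        left
        -- show x = b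
        obtain ⟨w, hw⟩ := card_eq_one.mp h1
        have hwm : w ∈ ({a, b} : Finset (Fin m)) ∩ {u, x} := hw ▸ mem_singleton_self w
        rw [mem_inter] at hwm
        have hwb : w = b := by
          rcases (by simpa using hwm.1 : w = a ∨ w = b) with hh | hh
          · exfalso
            rcases (by simpa using hwm.2 : w = u ∨ w = x) with h2' | h2'
            · exact hca (h2'.symm.trans hh)
            · exact hxa (h2'.symm.trans hh)
          · exact hh
        have hbx : b = x := by
          rcases (by simpa using hwm.2 : w = u ∨ w = x) with h2' | h2'
          · exact absurd (hwb.symm.trans h2') hbc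
          · exact hwb.symm.trans h2'
        rw [← hbx, pair_comm]
    · rintro (rfl | ⟨u, hu, v, hv, rfl⟩)
      · refine ⟨card_pair hbc, ?_, ?_⟩
        · rw [inter_comm, pair_inter_of_mem (by simp : b ∈ ({a, b} : Finset (Fin m))) hcp,
            card_singleton]
        · rw [pair_comm, pair_inter_of_mem (by simp : c ∈ ({a, c} : Finset (Fin m))) hbt,
            card_singleton]
      · subst hu
        simp only [mem_compl, mem_insert, mem_singleton, not_or] at hv
        obtain ⟨hva, hvb, hvc⟩ := hv
        have hne : u ≠ v := fun h => hva h.symm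
        refine ⟨card_pair hne, ?_, ?_⟩
        · rw [inter_comm,
            pair_inter_of_mem (by simp : u ∈ ({u, b} : Finset (Fin m)))
              (by simp [hva, hvb] : v ∉ ({u, b} : Finset (Fin m))), card_singleton]
        · rw [pair_inter_of_mem (by simp : u ∈ ({u, c} : Finset (Fin m)))
              (by simp [hva, hvc] : v ∉ ({u, c} : Finset (Fin m))), card_singleton]
  rw [hsplit, card_insert_of_notMem ?_, hQ]
  · omega
  · simp only [mem_filter, mem_univ, true_and, mem_singleton, not_exists]
    rintro u ⟨rfl, v, hv, h⟩
    have hm : u ∈ ({b, c} : Finset (Fin m)) := by rw [h]; simp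
    rcases (by simpa using hm : u = b ∨ u = c) with h' | h'
    · exact hba h'.symm
    · exact hca h'.symm

lemma summand_split {p : Finset (Fin m)} (hp : p.card = 2) {r : Finset (Fin m)}
    (hr : r.card = 2) (c2 c1 c0 : ℚ) (t : Finset (Fin m)) :
    (if p = r then c2 else if (p ∩ r).card = 1 then c1 else c0) *
        (if (r ∩ t).card = 1 then (1 : ℚ) else 0)
      = c2 * (if (p ∩ r).card = 2 ∧ (r ∩ t).card = 1 then 1 else 0)
        + c1 * (if (p ∩ r).card = 1 ∧ (r ∩ t).card = 1 then 1 else 0)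
        + c0 * (if (p ∩ r).card = 0 ∧ (r ∩ t).card = 1 then 1 else 0) := by
  classical
  have hle : (p ∩ r).card ≤ 2 := hr ▸ card_le_card inter_subset_right
  have h2 : p = r ↔ (p ∩ r).card = 2 := (inter_card_two hp hr).symm
  have hcases : (p ∩ r).card = 0 ∨ (p ∩ r).card = 1 ∨ (p ∩ r).card = 2 := by omega
  rcases hcases with h | h | h <;> by_cases hB : (r ∩ t).card = 1 <;>
    simp [h, hB, h2]

theorem DB_sum (hm : 5 ≤ m ∨ m = 3) {p t : Finset (Fin m)} (hp : p.card = 2)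
    (ht : t.card = 2) :
    ∑ r ∈ univ.filter (fun r : Finset (Fin m) => r.card = 2),
      ((if p = r then -(m : ℚ) ^ 2 + 8 * m - 14
          else if (p ∩ r).card = 1 then (m : ℚ) - 4 else -2) /
        (2 * ((m : ℚ) - 2) * ((m : ℚ) - 4))) * (if (r ∩ t).card = 1 then (1 : ℚ) else 0)
      = if p = t then 1 else 0 := by
  classical
  have hm3 : 3 ≤ m := by rcases hm with h | h <;> omega
  have hmq : (3 : ℚ) ≤ (m : ℚ) := by exact_mod_cast hm3
  have h2ne : (m : ℚ) - 2 ≠ 0 := by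
    intro h
    have : (m : ℚ) = 2 := by linarith
    have : m = 2 := by exact_mod_cast this
    omega
  have h4ne : (m : ℚ) - 4 ≠ 0 := by
    intro h
    have : (m : ℚ) = 4 := by exact_mod_cast (by linarith : (m:ℚ) = 4)
    have : m = 4 := by exact_mod_cast this
    rcases hm with h' | h' <;> omega
  set c2 : ℚ := -(m : ℚ) ^ 2 + 8 * m - 14 with hc2
  set c1 : ℚ := (m : ℚ) - 4 with hc1
  set den : ℚ := 2 * ((m : ℚ) - 2) * ((m : ℚ) - 4) with hden
  have hdne : den ≠ 0 := by
    simp only [hden]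
    intro h
    rcases mul_eq_zero.mp h with h' | h'
    · rcases mul_eq_zero.mp h' with h'' | h''
      · norm_num at h''
      · exact h2ne h''
    · exact h4ne h'
  have step1 : ∑ r ∈ univ.filter (fun r : Finset (Fin m) => r.card = 2),
      ((if p = r then c2 else if (p ∩ r).card = 1 then c1 else -2) / den) *
        (if (r ∩ t).card = 1 then (1 : ℚ) else 0)
      = (∑ r ∈ univ.filter (fun r : Finset (Fin m) => r.card = 2),
          (c2 * (if (p ∩ r).card = 2 ∧ (r ∩ t).card = 1 then (1:ℚ) else 0)
          + c1 * (if (p ∩ r).card = 1 ∧ (r ∩ t).card = 1 then 1 else 0)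
          + (-2) * (if (p ∩ r).card = 0 ∧ (r ∩ t).card = 1 then 1 else 0))) / den := by
    rw [Finset.sum_div]
    apply Finset.sum_congr rfl
    intro r hr
    rw [mem_filter] at hr
    rw [div_mul_eq_mul_div, summand_split hp hr.2 c2 c1 (-2) t]
  rw [step1]
  rw [Finset.sum_add_distrib, Finset.sum_add_distrib, ← Finset.mul_sum, ← Finset.mul_sum,
    ← Finset.mul_sum, Finset.sum_boole, Finset.sum_boole, Finset.sum_boole,
    Finset.filter_filter, Finset.filter_filter, Finset.filter_filter]
  rw [count_N2 hp (t := t)]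
  by_cases hEq : p = t
  · subst hEq
    have hA : ((p ∩ p).card = 1) = False := by
      simp only [inter_self, hp, eq_iff_iff, iff_false]; omega
    rw [if_pos rfl]
    have hB : (univ.filter fun r : Finset (Fin m) =>
        r.card = 2 ∧ (p ∩ r).card = 1 ∧ (r ∩ p).card = 1)
        = univ.filter fun r : Finset (Fin m) => r.card = 2 ∧ (r ∩ p).card = 1 := by
      ext r
      simp only [mem_filter, mem_univ, true_and]
      rw [inter_comm]
      tauto
    have hC : (univ.filter fun r : Finset (Fin m) =>
        r.card = 2 ∧ (p ∩ r).card = 0 ∧ (r ∩ p).card = 1) = ∅ := by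
      apply filter_false_of_mem
      intro r _
      rintro ⟨_, h0, h1⟩
      rw [inter_comm] at h0
      omega
    rw [hB, hC, count_meet p hp]
    simp only [inter_self, hp]
    norm_num
    push_cast [Nat.cast_sub (show 2 ≤ m by omega)]
    field_simp
    ring
  · rw [if_neg hEq]
    have hne2 : (p ∩ t).card ≠ 2 := fun h => hEq ((inter_card_two hp ht).mp h)
    have hle : (p ∩ t).card ≤ 2 := ht ▸ card_le_card inter_subset_right
    have : (p ∩ t).card = 0 ∨ (p ∩ t).card = 1 := by omega
    rcases this with h0 | h1
    · rw [if_neg (by omega)]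
      have hptE : p ∩ t = ∅ := card_eq_zero.mp h0
      have h4m : 4 ≤ m := by
        have := card_union_of_disjoint (disjoint_iff_inter_eq_empty.mpr hptE)
        have hle4 : (p ∪ t).card ≤ m := by
          calc (p ∪ t).card ≤ (univ : Finset (Fin m)).card := card_le_univ _
          _ = m := by rw [card_univ, Fintype.card_fin]
        omega
      rw [count_N1_disj hp ht hptE, count_N0_disj hp ht hptE]
      push_cast [Nat.cast_sub (show 4 ≤ m by omega)]
      rw [div_eq_iff hdne]
      ring
    · rw [if_pos h1, count_N1_share hp ht h1, count_N0_share hp ht h1]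
      push_cast [Nat.cast_sub (show 2 ≤ m by omega), Nat.cast_sub (show 3 ≤ m by omega)]
      rw [div_eq_iff hdne]
      simp only [hc2, hc1]
      ring

section mainZB
variable {q : ℕ}

lemma pairPtn_mem_Pset (hm3 : 3 ≤ m) (hq : 2 ≤ q) (p : OO m) :
    ({p.1, p.1ᶜ} : Ptn m) ∈ Pset m q := by
  have hpc : p.1ᶜ.card = m - 2 := by
    rw [card_compl, p.2, Fintype.card_fin]
  constructor
  · constructor
    · intro c hc
      rcases Finset.mem_insert.mp hc with rfl | hc
      · rw [← Finset.card_pos, p.2]; omega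
      · rw [Finset.mem_singleton] at hc
        subst hc
        rw [← Finset.card_pos, hpc]; omega
    · intro i
      by_cases hi : i ∈ p.1
      · refine ⟨p.1, ⟨by simp, hi⟩, ?_⟩
        rintro c ⟨hc, hic⟩
        rcases Finset.mem_insert.mp hc with rfl | hc
        · rfl
        · rw [Finset.mem_singleton] at hc
          subst hc
          exact absurd hi (Finset.mem_compl.mp hic)
      · refine ⟨p.1ᶜ, ⟨by simp, Finset.mem_compl.mpr hi⟩, ?_⟩
        rintro c ⟨hc, hic⟩
        rcases Finset.mem_insert.mp hc with rfl | hc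
        · exact absurd hic hi
        · exact Finset.mem_singleton.mp hc
  · have h2 : ({p.1, p.1ᶜ} : Ptn m).card ≤ 2 := by
      apply le_trans (Finset.card_insert_le _ _)
      simp
    exact le_trans h2 hq

/-- the pair partition as an element of `PP`. -/
noncomputable def pairPP (hm3 : 3 ≤ m) (hq : 2 ≤ q) (p : OO m) : PP m q :=
  ⟨({p.1, p.1ᶜ} : Ptn m), pairPtn_mem_Pset hm3 hq p⟩

lemma delta_pairPP (hm3 : 3 ≤ m) (hq : 2 ≤ q) (p t : OO m) :
    Delta (pairPP (q := q) hm3 hq p) t = Bmat m p t := by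
  have hsub : (∃ c ∈ ({p.1, p.1ᶜ} : Ptn m), t.1 ⊆ c) ↔ (p.1 ∩ t.1).card ≠ 1 := by
    constructor
    · rintro ⟨c, hc, htc⟩
      rcases Finset.mem_insert.mp hc with rfl | hc
      · have ht1 : t.1 = p.1 := Finset.eq_of_subset_of_card_le htc (by rw [p.2, t.2])
        rw [ht1, Finset.inter_self, p.2]
        omega
      · rw [Finset.mem_singleton] at hc
        subst hc
        have : Disjoint t.1 p.1 := (disjoint_compl_left).mono_left htc
        rw [Finset.inter_comm, Finset.card_eq_zero.mpr (Finset.disjoint_iff_inter_eq_empty.mp this)]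
        omega
    · intro h
      have hle : (p.1 ∩ t.1).card ≤ 2 := by
        calc (p.1 ∩ t.1).card ≤ t.1.card := Finset.card_le_card Finset.inter_subset_right
        _ = 2 := t.2
      have : (p.1 ∩ t.1).card = 0 ∨ (p.1 ∩ t.1).card = 2 := by omega
      rcases this with h0 | h2
      · refine ⟨p.1ᶜ, by simp, ?_⟩
        rw [Finset.card_eq_zero] at h0
        intro x hx
        rw [Finset.mem_compl]
        intro hxp
        have : x ∈ p.1 ∩ t.1 := Finset.mem_inter.mpr ⟨hxp, hx⟩
        rw [h0] at this
        exact Finset.notMem_empty x this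
      · refine ⟨p.1, by simp, ?_⟩
        rw [(inter_card_two p.2 t.2).mp h2]
  rw [Delta, Bmat]
  simp only [Matrix.of_apply, pairPP]
  by_cases h : (p.1 ∩ t.1).card = 1
  · exact (if_neg (fun hc => (hsub.mp hc) h)).trans (if_pos h).symm
  · exact (if_pos (hsub.mpr h)).trans (if_neg h).symm

lemma pairPP_inj (hm : 5 ≤ m ∨ m = 3) (hm3 : 3 ≤ m) (hq : 2 ≤ q) {p t : OO m}
    (h : pairPP (q := q) hm3 hq p = pairPP hm3 hq t) : p = t := by
  have h1 : ({p.1, p.1ᶜ} : Ptn m) = {t.1, t.1ᶜ} := congrArg Subtype.val h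
  have hp1 : p.1 ∈ ({t.1, t.1ᶜ} : Ptn m) := h1 ▸ (by simp)
  rcases Finset.mem_insert.mp hp1 with hc | hc
  · exact Subtype.ext hc
  · rw [Finset.mem_singleton] at hc
    exfalso
    have : p.1.card = m - 2 := by
      rw [hc, card_compl, t.2, Fintype.card_fin]
    rw [p.2] at this
    rcases hm with h' | h' <;> omega

lemma mem_P2_iff (hm3 : 3 ≤ m) (hq : 2 ≤ q) (α : PP m q) :
    (α : Ptn m) ∈ P2set m ↔ ∃ p : OO m, α = pairPP (q := q) hm3 hq p := by
  constructor
  · rintro ⟨p, hp2, hp⟩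
    refine ⟨⟨p, hp2⟩, Subtype.ext hp⟩
  · rintro ⟨p, rfl⟩
    exact ⟨p.1, p.2, rfl⟩

lemma DB_type (hm : 5 ≤ m ∨ m = 3) (r t : OO m) :
    ∑ p : OO m, Dmat m r p * Bmat m p t = if r = t then 1 else 0 := by
  have hrw : ∀ p : OO m, Dmat m r p * Bmat m p t =
      ((if r.1 = p.1 then -(m : ℚ) ^ 2 + 8 * m - 14
          else if (r.1 ∩ p.1).card = 1 then (m : ℚ) - 4 else -2) /
        (2 * ((m : ℚ) - 2) * ((m : ℚ) - 4))) * (if (p.1 ∩ t.1).card = 1 then (1:ℚ) else 0) := by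
    intro p
    rw [Dmat, Bmat]
    simp only [Matrix.of_apply, Subtype.ext_iff]
  rw [show (if r = t then (1:ℚ) else 0) = (if r.1 = t.1 then 1 else 0) by
    simp only [Subtype.ext_iff]]
  calc ∑ p : OO m, Dmat m r p * Bmat m p t
      = ∑ p : OO m,
        ((if r.1 = p.1 then -(m : ℚ) ^ 2 + 8 * m - 14
          else if (r.1 ∩ p.1).card = 1 then (m : ℚ) - 4 else -2) /
        (2 * ((m : ℚ) - 2) * ((m : ℚ) - 4))) * (if (p.1 ∩ t.1).card = 1 then (1:ℚ) else 0) :=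
        Finset.sum_congr rfl (fun p _ => hrw p)
    _ = ∑ p ∈ univ.filter (fun x : Finset (Fin m) => x.card = 2),
        ((if r.1 = p then -(m : ℚ) ^ 2 + 8 * m - 14
          else if (r.1 ∩ p).card = 1 then (m : ℚ) - 4 else -2) /
        (2 * ((m : ℚ) - 2) * ((m : ℚ) - 4))) * (if (p ∩ t.1).card = 1 then (1:ℚ) else 0) := by
        exact (Finset.sum_subtype (univ.filter (fun x : Finset (Fin m) => x.card = 2))
          (by simp)
          (fun x => ((if r.1 = x then -(m : ℚ) ^ 2 + 8 * m - 14
            else if (r.1 ∩ x).card = 1 then (m : ℚ) - 4 else -2) /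
            (2 * ((m : ℚ) - 2) * ((m : ℚ) - 4))) *
            (if (x ∩ t.1).card = 1 then (1:ℚ) else 0))).symm
    _ = if r.1 = t.1 then 1 else 0 := DB_sum hm r.2 t.2

lemma Bmat_symm (p t : OO m) : Bmat m p t = Bmat m t p := by
  rw [Bmat]
  simp only [Matrix.of_apply, Finset.inter_comm]

lemma Dmat_symm (p t : OO m) : Dmat m p t = Dmat m t p := by
  rw [Dmat]
  simp only [Matrix.of_apply, Finset.inter_comm, eq_comm]

lemma BD_type (hm : 5 ≤ m ∨ m = 3) (r t : OO m) :
    ∑ p : OO m, Bmat m r p * Dmat m p t = if r = t then 1 else 0 := by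
  calc ∑ p : OO m, Bmat m r p * Dmat m p t
      = ∑ p : OO m, Dmat m t p * Bmat m p r := by
        apply Finset.sum_congr rfl
        intro p _
        rw [Bmat_symm, Dmat_symm, mul_comm]
    _ = if t = r then 1 else 0 := DB_type hm t r
    _ = if r = t then 1 else 0 := by simp [eq_comm]

lemma WLin_apply (η : PP m q → ℚ) (t : OO m) :
    WLin m q η t = ∑ α : PP m q, η α * Delta α t := rfl

lemma W_xi (hm : 5 ≤ m ∨ m = 3) (hm3 : 3 ≤ m) (hq : 2 ≤ q) (x : OO m → ℚ) :
    WLin m q (xi m q x) = x := by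
  funext t
  rw [WLin_apply]
  have step : ∀ α : PP m q, xi m q x α * Delta α t
      = ∑ r : OO m, ∑ p : OO m,
          x r * Dmat m r p * ((if α = pairPP (q := q) hm3 hq p then (1:ℚ) else 0) * Delta α t) := by
    intro α
    rw [xi]
    rw [Finset.sum_mul]
    apply Finset.sum_congr rfl
    intro r _
    rw [mul_assoc, Finset.sum_mul, Finset.mul_sum]
    apply Finset.sum_congr rfl
    intro p _
    have : (if α.1 = ({p.1, p.1ᶜ} : Ptn m) then (1:ℚ) else 0)
        = (if α = pairPP (q := q) hm3 hq p then (1:ℚ) else 0) := by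
      simp only [pairPP, Subtype.ext_iff]
    rw [this]
    ring
  calc ∑ α : PP m q, xi m q x α * Delta α t
      = ∑ α : PP m q, ∑ r : OO m, ∑ p : OO m,
          x r * Dmat m r p * ((if α = pairPP (q := q) hm3 hq p then (1:ℚ) else 0) * Delta α t) :=
        Finset.sum_congr rfl (fun α _ => step α)
    _ = ∑ r : OO m, ∑ p : OO m, ∑ α : PP m q,
          x r * Dmat m r p * ((if α = pairPP (q := q) hm3 hq p then (1:ℚ) else 0) * Delta α t) := by
        rw [Finset.sum_comm]
        apply Finset.sum_congr rfl
        intro r _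
        rw [Finset.sum_comm]
    _ = ∑ r : OO m, ∑ p : OO m, x r * Dmat m r p * Delta (pairPP (q := q) hm3 hq p) t := by
        apply Finset.sum_congr rfl
        intro r _
        apply Finset.sum_congr rfl
        intro p _
        rw [← Finset.mul_sum]
        congr 1
        rw [Finset.sum_eq_single (pairPP (q := q) hm3 hq p)]
        · simp
        · intro β _ hβ
          rw [if_neg hβ, zero_mul]
        · intro h
          exact absurd (Finset.mem_univ _) h
    _ = ∑ r : OO m, x r * ∑ p : OO m, Dmat m r p * Bmat m p t := by
        apply Finset.sum_congr rfl
        intro r _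
        rw [Finset.mul_sum]
        apply Finset.sum_congr rfl
        intro p _
        rw [delta_pairPP hm3 hq, mul_assoc]
    _ = x t := by
        rw [Finset.sum_eq_single t]
        · rw [DB_type hm t t, if_pos rfl, mul_one]
        · intro r _ hr
          rw [DB_type hm, if_neg hr, mul_zero]
        · intro h
          exact absurd (Finset.mem_univ _) h

end mainZB

lemma xi_apply_notP2 (x : OO m → ℚ) {β : PP m q} (hβ : (β : Ptn m) ∉ P2set m) :
    xi m q x β = 0 := by
  rw [xi]
  apply Finset.sum_eq_zero
  intro r _
  rw [Finset.sum_eq_zero, mul_zero]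
  intro p _
  rw [if_neg, mul_zero]
  intro h
  exact hβ ⟨p.1, p.2, h⟩

lemma zeta_apply_notP2 (α : PP m q) {β : PP m q} (hβ : (β : Ptn m) ∉ P2set m) :
    zeta m q α β = if β = α then 1 else 0 := by
  rw [zeta]
  show (if β = α then (1:ℚ) else 0) - xi m q (fun p => Delta α p) β = _
  rw [xi_apply_notP2 _ hβ, sub_zero]

lemma W_zeta (hm : 5 ≤ m ∨ m = 3) (hq : 2 ≤ q) (α : PP m q) :
    WLin m q (zeta m q α) = 0 := by
  have hm3 : 3 ≤ m := by rcases hm with h | h <;> omega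
  rw [zeta, map_sub, W_xi hm hm3 hq]
  funext t
  simp only [Pi.sub_apply, Pi.zero_apply, WLin_apply]
  rw [Finset.sum_eq_single α]
  · simp
  · intro β _ hβ
    rw [if_neg hβ, zero_mul]
  · intro h
    exact absurd (Finset.mem_univ _) h

/-- for `q ≥ 2` and `m ≥ 5` or `m = 3`, `W(ζ_α) = 0` for all `α ∈ P ∖ P₂`,
and the family `{ζ_α : α ∈ P ∖ P₂}` is a basis of `Ker W`. -/
theorem zeta_basis_kerW (m q : ℕ) (hq : 2 ≤ q) (hm : 5 ≤ m ∨ m = 3) :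
    (∀ α : PP m q, (α : Ptn m) ∉ P2set m → WLin m q (zeta m q α) = 0) ∧
    LinearIndependent ℚ
      (fun α : {α : PP m q // (α : Ptn m) ∉ P2set m} => zeta m q α.1) ∧
    Submodule.span ℚ
        (Set.range fun α : {α : PP m q // (α : Ptn m) ∉ P2set m} => zeta m q α.1) =
      LinearMap.ker (WLin m q) := by
  classical
  have hm3 : 3 ≤ m := by rcases hm with h | h <;> omega
  haveI : Fintype {α : PP m q // (α : Ptn m) ∉ P2set m} := Fintype.ofFinite _
  refine ⟨fun α _ => W_zeta hm hq α, ?_, ?_⟩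
  · rw [Fintype.linearIndependent_iff]
    intro g hg i
    have := congrFun hg i.1
    rw [Finset.sum_apply] at this
    rw [Pi.zero_apply] at this
    rw [Finset.sum_eq_single i] at this
    · rw [Pi.smul_apply, zeta_apply_notP2 _ i.2, if_pos rfl, smul_eq_mul, mul_one] at this
      exact this
    · intro j _ hj
      rw [Pi.smul_apply, zeta_apply_notP2 _ i.2, if_neg, smul_eq_mul, mul_zero]
      intro h
      exact hj (Subtype.ext h.symm)
    · intro h
      exact absurd (Finset.mem_univ _) h
  · apply le_antisymm
    · rw [Submodule.span_le]
      rintro _ ⟨i, rfl⟩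
      rw [SetLike.mem_coe, LinearMap.mem_ker]
      exact W_zeta hm hq i.1
    · intro η hη
      rw [LinearMap.mem_ker] at hη
      set η' : PP m q → ℚ :=
        η - ∑ i : {α : PP m q // (α : Ptn m) ∉ P2set m}, η i.1 • zeta m q i.1 with hη'
      have hη'notP2 : ∀ β : PP m q, (β : Ptn m) ∉ P2set m → η' β = 0 := by
        intro β hβ
        rw [hη', Pi.sub_apply, Finset.sum_apply]
        rw [Finset.sum_eq_single (⟨β, hβ⟩ : {α : PP m q // (α : Ptn m) ∉ P2set m})]
        · rw [Pi.smul_apply, zeta_apply_notP2 _ hβ, if_pos rfl, smul_eq_mul, mul_one, sub_self]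
        · intro j _ hj
          rw [Pi.smul_apply, zeta_apply_notP2 _ hβ, if_neg, smul_eq_mul, mul_zero]
          intro h
          exact hj (Subtype.ext h.symm)
        · intro h
          exact absurd (Finset.mem_univ _) h
      have hWη' : WLin m q η' = 0 := by
        rw [hη', map_sub, hη, map_sum, zero_sub, neg_eq_zero]
        rw [Finset.sum_eq_zero]
        intro i _
        rw [map_smul, W_zeta hm hq, smul_zero]
      -- η' is supported on P2; show it is 0 using invertibility of B
      set y : OO m → ℚ := fun p => η' (pairPP (q := q) hm3 hq p) with hy
      have hWB : ∀ t : OO m, ∑ p : OO m, y p * Bmat m p t = 0 := by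
        intro t
        have h1 : WLin m q η' t = 0 := by rw [hWη']; rfl
        rw [WLin_apply] at h1
        rw [← h1]
        symm
        -- reindex the sum over PP by pair partitions
        have hsplit : ∑ α : PP m q, η' α * Delta α t
            = ∑ α ∈ Finset.univ.filter (fun α : PP m q => (α : Ptn m) ∈ P2set m),
                η' α * Delta α t := by
          have hzero : ∑ α ∈ Finset.univ.filter
              (fun α : PP m q => ¬((α : Ptn m) ∈ P2set m)), η' α * Delta α t = 0 := by
            apply Finset.sum_eq_zero
            intro α hα
            rw [Finset.mem_filter] at hα
            rw [hη'notP2 α hα.2, zero_mul]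
          rw [← Finset.sum_filter_add_sum_filter_not Finset.univ
            (fun α : PP m q => (α : Ptn m) ∈ P2set m) (fun α => η' α * Delta α t), hzero, add_zero]
        rw [hsplit]
        have himg : (Finset.univ.filter fun α : PP m q => (α : Ptn m) ∈ P2set m)
            = Finset.univ.image (pairPP (q := q) hm3 hq) := by
          ext α
          simp only [Finset.mem_filter, Finset.mem_univ, true_and, Finset.mem_image]
          rw [mem_P2_iff hm3 hq]
          constructor
          · rintro ⟨p, rfl⟩; exact ⟨p, rfl⟩
          · rintro ⟨p, rfl⟩; exact ⟨p, rfl⟩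
        rw [himg, Finset.sum_image (fun p _ p' _ h => pairPP_inj hm hm3 hq h)]
        apply Finset.sum_congr rfl
        intro p _
        rw [delta_pairPP hm3 hq]
      have hy0 : ∀ s : OO m, y s = 0 := by
        intro s
        have : ∑ t : OO m, (∑ p : OO m, y p * Bmat m p t) * Dmat m t s = 0 := by
          apply Finset.sum_eq_zero
          intro t _
          rw [hWB t, zero_mul]
        have swap : ∑ t : OO m, (∑ p : OO m, y p * Bmat m p t) * Dmat m t s
            = ∑ p : OO m, y p * ∑ t : OO m, Bmat m p t * Dmat m t s := by
          calc ∑ t : OO m, (∑ p : OO m, y p * Bmat m p t) * Dmat m t s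
              = ∑ t : OO m, ∑ p : OO m, y p * (Bmat m p t * Dmat m t s) := by
                apply Finset.sum_congr rfl
                intro t _
                rw [Finset.sum_mul]
                apply Finset.sum_congr rfl
                intro p _
                ring
            _ = ∑ p : OO m, ∑ t : OO m, y p * (Bmat m p t * Dmat m t s) := Finset.sum_comm
            _ = ∑ p : OO m, y p * ∑ t : OO m, Bmat m p t * Dmat m t s := by
                apply Finset.sum_congr rfl
                intro p _
                rw [Finset.mul_sum]
        rw [swap] at this
        rw [Finset.sum_congr rfl (fun p _ => by rw [BD_type hm p s])] at this
        rw [Finset.sum_eq_single s] at this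
        · rw [if_pos rfl, mul_one] at this
          exact this
        · intro p _ hp
          rw [if_neg hp, mul_zero]
        · intro h
          exact absurd (Finset.mem_univ _) h
      have hη'0 : η' = 0 := by
        funext β
        by_cases hβ : (β : Ptn m) ∈ P2set m
        · obtain ⟨p, rfl⟩ := (mem_P2_iff hm3 hq β).mp hβ
          exact hy0 p
        · exact hη'notP2 β hβ
      have hfin : η = ∑ i : {α : PP m q // (α : Ptn m) ∉ P2set m}, η i.1 • zeta m q i.1 := by
        have h0 : η - ∑ i : {α : PP m q // (α : Ptn m) ∉ P2set m}, η i.1 • zeta m q i.1 = 0 := by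
          rw [← hη']
          exact hη'0
        rwa [sub_eq_zero] at h0
      rw [hfin]
      apply Submodule.sum_mem
      intro i _
      exact Submodule.smul_mem _ _ (Submodule.subset_span (Set.mem_range_self i))

end ZetaBasisAux
end

section
/- Let q ≥ 2 and let m be an integer with m ≥ 5 or m = 3. If η_0 ∈ Ker W and η_1 ∈ V_0, then Stab_W(η_0 + η_1) = Stab_W(η_1) = Stab(η_1). -/
section AuxStab

variable {m q : ℕ}

lemma aux_image_compl (g : Equiv.Perm (Fin m)) (p : Finset (Fin m)) :
    pᶜ.image g = (p.image g)ᶜ := by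
  ext i
  constructor
  · intro hmem
    obtain ⟨a, ha, rfl⟩ := Finset.mem_image.1 hmem
    rw [Finset.mem_compl] at ha ⊢
    intro hmem2
    obtain ⟨b, hb, hba⟩ := Finset.mem_image.1 hmem2
    exact ha (g.injective hba ▸ hb)
  · intro h
    rw [Finset.mem_compl] at h
    refine Finset.mem_image.2 ⟨g⁻¹ i, ?_, g.apply_symm_apply i⟩
    rw [Finset.mem_compl]
    intro hmem
    exact h (Finset.mem_image.2 ⟨g⁻¹ i, hmem, g.apply_symm_apply i⟩)

lemma aux_permPart_pair (g : Equiv.Perm (Fin m)) (p : Finset (Fin m)) :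
    permPart g {p, pᶜ} = {p.image g, (p.image g)ᶜ} := by
  simp [permPart, aux_image_compl]

lemma aux_image_cancel (g : Equiv.Perm (Fin m)) (c : Finset (Fin m)) :
    (c.image g).image (g⁻¹ : Equiv.Perm (Fin m)) = c := by
  rw [Finset.image_image]
  ext i
  simp [Finset.mem_image, Equiv.Perm.inv_def]

lemma aux_permPart_inv_cancel (g : Equiv.Perm (Fin m)) (α : Ptn m) :
    permPart g⁻¹ (permPart g α) = α := by
  unfold permPart
  ext c
  simp only [Finset.mem_image]
  constructor
  · rintro ⟨d, ⟨e, he, rfl⟩, rfl⟩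
    rw [aux_image_cancel g e]
    exact he
  · intro hc
    exact ⟨c.image g, ⟨c, hc, rfl⟩, aux_image_cancel g c⟩

lemma aux_permPart_cancel_inv (g : Equiv.Perm (Fin m)) (α : Ptn m) :
    permPart g (permPart g⁻¹ α) = α := by
  conv_lhs => rw [← inv_inv g]
  exact aux_permPart_inv_cancel g⁻¹ α

/-- The action of `S(M)` on `O`. -/
def OOmap (g : Equiv.Perm (Fin m)) (p : OO m) : OO m :=
  ⟨p.1.image g, by rw [Finset.card_image_of_injective _ g.injective, p.2]⟩

lemma aux_OOmap_cancel (g : Equiv.Perm (Fin m)) (p : OO m) :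
    OOmap g (OOmap g⁻¹ p) = p := by
  refine Subtype.ext ?_
  have h := aux_image_cancel g⁻¹ p.1
  rw [inv_inv] at h
  exact h

lemma aux_Delta_perm (g : Equiv.Perm (Fin m)) (α : PP m q) (p : OO m) :
    Delta (permPP g α) (OOmap g p) = Delta α p := by
  have hcond : (∃ c ∈ (permPP g α).1, (OOmap g p).1 ⊆ c) ↔ ∃ c ∈ α.1, p.1 ⊆ c := by
    constructor
    · rintro ⟨c, hc, hsub⟩
      obtain ⟨d, hd, rfl⟩ := Finset.mem_image.1 hc
      exact ⟨d, hd, (Finset.image_subset_image_iff g.injective).1 hsub⟩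
    · rintro ⟨c, hc, hsub⟩
      exact ⟨c.image g, Finset.mem_image_of_mem _ hc,
        (Finset.image_subset_image_iff g.injective).2 hsub⟩
  by_cases h : ∃ c ∈ α.1, p.1 ⊆ c
  · unfold Delta
    rw [if_pos (hcond.2 h), if_pos h]
  · unfold Delta
    rw [if_neg (fun hc => h (hcond.1 hc)), if_neg h]

/-- The action of `S(M)` on `P`, as an equivalence. -/
def permPPEquiv (m q : ℕ) (g : Equiv.Perm (Fin m)) : PP m q ≃ PP m q where
  toFun := permPP g
  invFun := permPP g⁻¹
  left_inv α := Subtype.ext (aux_permPart_inv_cancel g α.1)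
  right_inv α := Subtype.ext (aux_permPart_cancel_inv g α.1)

lemma aux_W_equiv (g : Equiv.Perm (Fin m)) (η : PP m q → ℚ) (p : OO m) :
    WLin m q (permF g η) p = WLin m q η (OOmap g⁻¹ p) := by
  show ∑ α : PP m q, η (permPP g⁻¹ α) * Delta α p
      = ∑ α : PP m q, η α * Delta α (OOmap g⁻¹ p)
  refine Eq.trans (Equiv.sum_comp (permPPEquiv m q g)
    (fun α => η (permPP g⁻¹ α) * Delta α p)).symm ?_
  refine Finset.sum_congr rfl fun β _ => ?_
  have h1 : permPP g⁻¹ (permPP (q := q) g β) = β :=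
    Subtype.ext (aux_permPart_inv_cancel g β.1)
  have h2 : Delta (permPP (q := q) g β) p = Delta β (OOmap g⁻¹ p) := by
    conv_lhs => rw [← aux_OOmap_cancel g p]
    exact aux_Delta_perm g β (OOmap g⁻¹ p)
  show η (permPP g⁻¹ (permPP g β)) * Delta (permPP g β) p = η β * Delta β (OOmap g⁻¹ p)
  rw [h1, h2]

lemma aux_pairPart_mem (hm : 3 ≤ m) (hq : 2 ≤ q) {r : Finset (Fin m)} (hr : r.card = 2) :
    ({r, rᶜ} : Ptn m) ∈ Pset m q := by
  have hrc : rᶜ.card = m - 2 := by rw [Finset.card_compl, hr, Fintype.card_fin]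
  refine ⟨⟨?_, ?_⟩, ?_⟩
  · intro c hc
    rcases Finset.mem_insert.1 hc with rfl | hc
    · exact Finset.card_pos.1 (by omega)
    · rw [Finset.mem_singleton] at hc; subst hc
      exact Finset.card_pos.1 (by omega)
  · intro i
    by_cases hi : i ∈ r
    · refine ⟨r, ⟨Finset.mem_insert_self _ _, hi⟩, ?_⟩
      rintro c ⟨hc, hic⟩
      rcases Finset.mem_insert.1 hc with rfl | hc
      · rfl
      · rw [Finset.mem_singleton] at hc; subst hc
        exact absurd hi (Finset.mem_compl.1 hic)
    · refine ⟨rᶜ, ⟨Finset.mem_insert_of_mem (Finset.mem_singleton_self _),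
        Finset.mem_compl.2 hi⟩, ?_⟩
      rintro c ⟨hc, hic⟩
      rcases Finset.mem_insert.1 hc with rfl | hc
      · exact absurd hic hi
      · rw [Finset.mem_singleton] at hc; exact hc
  · calc ({r, rᶜ} : Ptn m).card ≤ ({rᶜ} : Ptn m).card + 1 := Finset.card_insert_le _ _
      _ ≤ q := by simp; omega

lemma aux_Delta_pair {r : Finset (Fin m)} (h : ({r, rᶜ} : Ptn m) ∈ Pset m q)
    (hr : r.card = 2) (t : OO m) :
    Delta (⟨{r, rᶜ}, h⟩ : PP m q) t = if (r ∩ t.1).card = 1 then 1 else 0 := by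
  have hcond : (∃ c ∈ ({r, rᶜ} : Ptn m), t.1 ⊆ c) ↔ (r ∩ t.1).card ≠ 1 := by
    constructor
    · rintro ⟨c, hc, hsub⟩
      rcases Finset.mem_insert.1 hc with rfl | hc
      · have h2 : c ∩ t.1 = t.1 := Finset.inter_eq_right.2 hsub
        rw [h2, t.2]; omega
      · rw [Finset.mem_singleton] at hc; subst hc
        have h2 : r ∩ t.1 = ∅ := by
          ext i
          simp only [Finset.mem_inter, Finset.notMem_empty, iff_false, not_and]
          intro hir hit
          exact (Finset.mem_compl.1 (hsub hit)) hir
        rw [h2]; simp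
    · intro hne
      have hle : (r ∩ t.1).card ≤ 2 :=
        le_of_le_of_eq (Finset.card_le_card Finset.inter_subset_right) t.2
      have h02 : (r ∩ t.1).card = 0 ∨ (r ∩ t.1).card = 2 := by omega
      rcases h02 with h0 | h2
      · refine ⟨rᶜ, Finset.mem_insert_of_mem (Finset.mem_singleton_self _), fun i hit => ?_⟩
        refine Finset.mem_compl.2 fun hir => ?_
        have : i ∈ r ∩ t.1 := Finset.mem_inter.2 ⟨hir, hit⟩
        rw [Finset.card_eq_zero.1 h0] at this
        exact absurd this (Finset.notMem_empty i)
      · refine ⟨r, Finset.mem_insert_self _ _, ?_⟩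
        have h3 : r ∩ t.1 = t.1 :=
          Finset.eq_of_subset_of_card_le Finset.inter_subset_right (by rw [t.2, h2])
        intro i hit
        rw [← h3] at hit
        exact (Finset.mem_inter.1 hit).1
  by_cases h1 : (r ∩ t.1).card = 1
  · unfold Delta
    rw [if_neg (fun hc => (hcond.1 hc) h1), if_pos h1]
  · unfold Delta
    rw [if_pos (hcond.2 h1), if_neg h1]

lemma aux_pair_inj (hm4 : m ≠ 4) {r r' : Finset (Fin m)} (hr : r.card = 2) (hr' : r'.card = 2)
    (h : ({r, rᶜ} : Ptn m) = {r', r'ᶜ}) : r = r' := by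
  have h1 : r ∈ ({r', r'ᶜ} : Ptn m) := h ▸ Finset.mem_insert_self _ _
  rcases Finset.mem_insert.1 h1 with h2 | h2
  · exact h2
  · rw [Finset.mem_singleton] at h2
    rw [h2, Finset.card_compl, hr', Fintype.card_fin] at hr
    omega

/-- Multiplicities of the `P₂`-classes, as a function on raw 2-element subsets. -/
noncomputable def xfun (m q : ℕ) (hm : 3 ≤ m) (hq : 2 ≤ q) (η : PP m q → ℚ)
    (r : Finset (Fin m)) : ℚ :=
  if h : r.card = 2 then η ⟨{r, rᶜ}, aux_pairPart_mem hm hq h⟩ else 0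

lemma aux_WLin_V0 (hm : 3 ≤ m) (hm4 : m ≠ 4) (hq : 2 ≤ q) {η : PP m q → ℚ}
    (hη : η ∈ V0 m q) (t : OO m) :
    WLin m q η t = ∑ r ∈ Finset.univ.filter (fun r : Finset (Fin m) => r.card = 2),
      (if (r ∩ t.1).card = 1 then xfun m q hm hq η r else 0) := by
  classical
  have h0 : WLin m q η t = ∑ α : PP m q, η α * Delta α t := rfl
  rw [h0, ← Finset.sum_filter_add_sum_filter_not Finset.univ
    (fun α : PP m q => α.1 ∈ P2set m)]
  have h2 : ∑ α ∈ Finset.univ.filter (fun α : PP m q => ¬ α.1 ∈ P2set m),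
      η α * Delta α t = 0 := by
    refine Finset.sum_eq_zero fun α hα => ?_
    rw [hη α (Finset.mem_filter.1 hα).2, zero_mul]
  rw [h2, add_zero]
  refine (Finset.sum_bij
    (fun r hr => (⟨{r, rᶜ}, aux_pairPart_mem hm hq (Finset.mem_filter.1 hr).2⟩ : PP m q))
    ?_ ?_ ?_ ?_).symm
  · intro r hr
    exact Finset.mem_filter.2 ⟨Finset.mem_univ _, ⟨r, (Finset.mem_filter.1 hr).2, rfl⟩⟩
  · intro r hr r' hr' hEq
    exact aux_pair_inj hm4 (Finset.mem_filter.1 hr).2 (Finset.mem_filter.1 hr').2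
      (congrArg Subtype.val hEq)
  · intro α hα
    obtain ⟨p, hp2, hpe⟩ := (Finset.mem_filter.1 hα).2
    exact ⟨p, Finset.mem_filter.2 ⟨Finset.mem_univ _, hp2⟩, Subtype.ext hpe.symm⟩
  · intro r hr
    have hr2 := (Finset.mem_filter.1 hr).2
    rw [aux_Delta_pair _ hr2 t]
    unfold xfun
    rw [dif_pos hr2]
    by_cases h1 : (r ∩ t.1).card = 1 <;> simp [h1]

lemma aux_ker_V0 (hm : 3 ≤ m) (hm4 : m ≠ 4) (hq : 2 ≤ q) {η : PP m q → ℚ}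
    (hη : η ∈ V0 m q) (hW : WLin m q η = 0) : η = 0 := by
  classical
  set x : Finset (Fin m) → ℚ := xfun m q hm hq η with hxdef
  set Q2 : Finset (Finset (Fin m)) :=
    Finset.univ.filter (fun r : Finset (Fin m) => r.card = 2) with hQ2
  have hWt : ∀ t : Finset (Fin m), t.card = 2 →
      ∑ r ∈ Q2, (if (r ∩ t).card = 1 then x r else 0) = 0 := by
    intro t ht
    have h := aux_WLin_V0 hm hm4 hq hη ⟨t, ht⟩
    rw [hW] at h
    rw [Pi.zero_apply] at h
    exact h.symm
  set s : Fin m → ℚ := fun i => ∑ r ∈ Q2, (if i ∈ r then x r else 0) with hsdef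
  have star : ∀ a b : Fin m, a ≠ b → s a + s b = 2 * x {a, b} := by
    intro a b hab
    have htc : ({a, b} : Finset (Fin m)).card = 2 := Finset.card_pair hab
    have hmem : ({a, b} : Finset (Fin m)) ∈ Q2 :=
      Finset.mem_filter.2 ⟨Finset.mem_univ _, htc⟩
    have h1 : s a + s b = ∑ r ∈ Q2, ((r ∩ ({a, b} : Finset (Fin m))).card : ℚ) * x r := by
      have inner : ∀ r : Finset (Fin m),
          ∑ i ∈ ({a, b} : Finset (Fin m)), (if i ∈ r then x r else 0)
          = ((r ∩ ({a, b} : Finset (Fin m))).card : ℚ) * x r := by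
        intro r
        rw [← Finset.sum_filter, Finset.sum_const, Finset.filter_mem_eq_inter,
          Finset.inter_comm, nsmul_eq_mul]
      calc s a + s b = ∑ i ∈ ({a, b} : Finset (Fin m)), s i := (Finset.sum_pair hab).symm
        _ = ∑ i ∈ ({a, b} : Finset (Fin m)), ∑ r ∈ Q2, (if i ∈ r then x r else 0) := rfl
        _ = ∑ r ∈ Q2, ∑ i ∈ ({a, b} : Finset (Fin m)), (if i ∈ r then x r else 0) :=
            Finset.sum_comm
        _ = _ := Finset.sum_congr rfl fun r _ => inner r
    have h2 : ∀ r ∈ Q2, ((r ∩ ({a, b} : Finset (Fin m))).card : ℚ) * x r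
        = (if (r ∩ ({a, b} : Finset (Fin m))).card = 1 then x r else 0)
          + (if r = ({a, b} : Finset (Fin m)) then 2 * x r else 0) := by
      intro r hr
      have hrc : r.card = 2 := (Finset.mem_filter.1 hr).2
      have hle : (r ∩ ({a, b} : Finset (Fin m))).card ≤ 2 :=
        le_of_le_of_eq (Finset.card_le_card Finset.inter_subset_right) htc
      by_cases heq : r = ({a, b} : Finset (Fin m))
      · subst heq
        rw [Finset.inter_self, hrc]
        norm_num
      · have h2' : (r ∩ ({a, b} : Finset (Fin m))).card ≠ 2 := by
          intro hc
          apply heq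
          have h3 : r ∩ ({a, b} : Finset (Fin m)) = ({a, b} : Finset (Fin m)) :=
            Finset.eq_of_subset_of_card_le Finset.inter_subset_right (by omega)
          have h4 : r ∩ ({a, b} : Finset (Fin m)) = r :=
            Finset.eq_of_subset_of_card_le Finset.inter_subset_left (by omega)
          exact h4.symm.trans h3
        have h01 : (r ∩ ({a, b} : Finset (Fin m))).card = 0
            ∨ (r ∩ ({a, b} : Finset (Fin m))).card = 1 := by omega
        rcases h01 with h | h <;> rw [h] <;> simp [heq]
    have h3 : s a + s b
        = (∑ r ∈ Q2, (if (r ∩ ({a, b} : Finset (Fin m))).card = 1 then x r else 0))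
          + ∑ r ∈ Q2, (if r = ({a, b} : Finset (Fin m)) then 2 * x r else 0) := by
      rw [h1, ← Finset.sum_add_distrib]
      exact Finset.sum_congr rfl h2
    rw [h3, hWt _ htc, zero_add, Finset.sum_ite_eq' Q2 _ (fun r => 2 * x r), if_pos hmem]
  have claim3 : ∀ i : Fin m, s i = ∑ j ∈ Finset.univ.erase i, x {i, j} := by
    intro i
    have himg : Q2.filter (fun r => i ∈ r)
        = (Finset.univ.erase i).image (fun j => ({i, j} : Finset (Fin m))) := by
      ext r
      simp only [Finset.mem_filter, Finset.mem_image, Finset.mem_erase, Finset.mem_univ,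
        and_true, hQ2, true_and]
      constructor
      · rintro ⟨hr2, hir⟩
        obtain ⟨u, v, huv, rfl⟩ := Finset.card_eq_two.1 hr2
        rcases Finset.mem_insert.1 hir with rfl | h
        · exact ⟨v, Ne.symm huv, rfl⟩
        · rw [Finset.mem_singleton] at h; subst h
          exact ⟨u, huv, by rw [Finset.pair_comm]⟩
      · rintro ⟨j, hji, rfl⟩
        exact ⟨Finset.card_pair (Ne.symm hji), Finset.mem_insert_self _ _⟩
    have hinj : ∀ a ∈ Finset.univ.erase i, ∀ b ∈ Finset.univ.erase i,
        ({i, a} : Finset (Fin m)) = {i, b} → a = b := by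
      intro a ha b hb hEq
      have hmem : a ∈ ({i, b} : Finset (Fin m)) := hEq ▸ (by simp)
      rcases Finset.mem_insert.1 hmem with h | h
      · exact absurd h (Finset.mem_erase.1 ha).1
      · exact Finset.mem_singleton.1 h
    calc s i = ∑ r ∈ Q2.filter (fun r => i ∈ r), x r := (Finset.sum_filter _ _).symm
      _ = ∑ j ∈ Finset.univ.erase i, x {i, j} := by rw [himg, Finset.sum_image hinj]
  set S : ℚ := ∑ j, s j with hS
  have key : ∀ i : Fin m, ((m : ℚ) - 4) * s i + S = 0 := by
    intro i
    have h1pre : ∑ j ∈ Finset.univ.erase i, x {i, j}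
        = (∑ j ∈ Finset.univ.erase i, (s i + s j)) / 2 := by
      rw [Finset.sum_div]
      refine Finset.sum_congr rfl fun j hj => ?_
      have hji : j ≠ i := (Finset.mem_erase.1 hj).1
      have hst := star i j (Ne.symm hji)
      linarith
    have h1 : s i = (∑ j ∈ Finset.univ.erase i, (s i + s j)) / 2 :=
      (claim3 i).trans h1pre
    have hcard : (Finset.univ.erase i).card = m - 1 := by
      rw [Finset.card_erase_of_mem (Finset.mem_univ i), Finset.card_univ, Fintype.card_fin]
    have h2 : ∑ j ∈ Finset.univ.erase i, (s i + s j)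
        = ((m - 1 : ℕ) : ℚ) * s i + (S - s i) := by
      rw [Finset.sum_add_distrib, Finset.sum_const, hcard, nsmul_eq_mul,
        Finset.sum_erase_eq_sub (Finset.mem_univ i)]
    have hm1 : ((m - 1 : ℕ) : ℚ) = (m : ℚ) - 1 := by
      push_cast [Nat.cast_sub (by omega : 1 ≤ m)]
      ring
    rw [h2, hm1] at h1
    linear_combination (-2 : ℚ) * h1
  have hS0 : S = 0 := by
    have hsum0 : ∑ i : Fin m, (((m : ℚ) - 4) * s i + S) = 0 := by
      simp [key]
    have hexp : ∑ i : Fin m, (((m : ℚ) - 4) * s i + S)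
        = ((m : ℚ) - 4) * S + (m : ℚ) * S := by
      rw [Finset.sum_add_distrib, ← Finset.mul_sum, Finset.sum_const, Finset.card_univ,
        Fintype.card_fin, nsmul_eq_mul, ← hS]
    have h5 : ((m : ℚ) - 4) * S + (m : ℚ) * S = 0 := by rw [← hexp]; exact hsum0
    have hmm : (3 : ℚ) ≤ (m : ℚ) := by exact_mod_cast hm
    have h6 : (2 * (m : ℚ) - 4) * S = 0 := by linear_combination h5
    have h7 : (2 * (m : ℚ) - 4) ≠ 0 := by intro h; rw [sub_eq_zero] at h; nlinarith
    exact (mul_eq_zero.1 h6).resolve_left h7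
  have hs0 : ∀ i : Fin m, s i = 0 := by
    intro i
    have h := key i
    rw [hS0, add_zero] at h
    have hm4' : (m : ℚ) - 4 ≠ 0 := by
      intro hc
      rw [sub_eq_zero] at hc
      exact hm4 (by exact_mod_cast hc)
    exact (mul_eq_zero.1 h).resolve_left hm4'
  have hx0 : ∀ a b : Fin m, a ≠ b → x {a, b} = 0 := by
    intro a b hab
    have := star a b hab
    rw [hs0 a, hs0 b] at this
    linarith
  funext α
  show η α = 0
  by_cases hα : (α : Ptn m) ∈ P2set m
  · obtain ⟨p, hp2, hpe⟩ := hα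
    obtain ⟨a, b, hab, rfl⟩ := Finset.card_eq_two.1 hp2
    have h1 : η α = x {a, b} := by
      rw [hxdef]
      unfold xfun
      rw [dif_pos hp2]
      exact congrArg η (Subtype.ext hpe)
    rw [h1, hx0 a b hab]
  · exact hη α hα

lemma aux_permF_mem_V0 (g : Equiv.Perm (Fin m)) {η : PP m q → ℚ} (hη : η ∈ V0 m q) :
    permF g η ∈ V0 m q := by
  intro α hα
  refine hη _ fun hmem => hα ?_
  obtain ⟨p, hp2, hpe⟩ := hmem
  refine ⟨p.image g, by rw [Finset.card_image_of_injective _ g.injective, hp2], ?_⟩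
  have h1 : (α : Ptn m) = permPart g (permPart g⁻¹ α.1) :=
    (aux_permPart_cancel_inv g α.1).symm
  have h2 : (permPP g⁻¹ α).1 = permPart g⁻¹ α.1 := rfl
  rw [h1, ← h2, hpe, aux_permPart_pair]

end AuxStab

/-- for `q ≥ 2` and `m ≥ 5` or `m = 3`, if `η₀ ∈ Ker W` and `η₁ ∈ V₀`, then
`Stab_W(η₀ + η₁) = Stab_W(η₁) = Stab(η₁)`. -/
theorem stabW_add (m q : ℕ) (hq : 2 ≤ q) (hm : 5 ≤ m ∨ m = 3)
    (η₀ η₁ : PP m q → ℚ) (h₀ : WLin m q η₀ = 0) (h₁ : η₁ ∈ V0 m q) :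
    StabWSet m q (η₀ + η₁) = StabWSet m q η₁ ∧ StabWSet m q η₁ = StabSet η₁ := by
  have hm3 : 3 ≤ m := by rcases hm with h | h <;> omega
  have hm4 : m ≠ 4 := by rcases hm with h | h <;> omega
  constructor
  · ext g
    simp only [StabWSet, Set.mem_setOf_eq]
    have e0 : WLin m q (permF g η₀) = 0 := by
      funext p
      rw [aux_W_equiv, h₀]
      rfl
    have hsplit : permF g (η₀ + η₁) = permF g η₀ + permF g η₁ := rfl
    rw [hsplit, map_add, map_add, e0, h₀, zero_add, zero_add]
  · ext g
    simp only [StabWSet, StabSet, Set.mem_setOf_eq]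
    constructor
    · intro hg
      have hδ : permF g η₁ - η₁ ∈ V0 m q := by
        intro α hα
        show permF g η₁ α - η₁ α = 0
        rw [aux_permF_mem_V0 g h₁ α hα, h₁ α hα, sub_zero]
      have hWδ : WLin m q (permF g η₁ - η₁) = 0 := by
        rw [map_sub, hg, sub_self]
      have h := aux_ker_V0 hm3 hm4 hq hδ hWδ
      exact sub_eq_zero.1 h
    · intro hg
      rw [hg]
end

section
/- Let A = {0,1} be the binary alphabet and M = {1,2,3,4}. For every subgroup H ≤ S(M) that is closed under the action on O, there exist a positive integer n and a code C ⊆ A^n with exactly 4 codewords (with some encoding bijection λ : M → C) such that Iso(C) = Mon(C) = H. -/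
namespace BFC
open Finset


lemma sum_digits_lt (k : ℕ) (f : ℕ → ℕ) (hf : ∀ d, f d < 25) :
    ∑ d ∈ range k, f d * 25 ^ d < 25 ^ k := by
  induction k with
  | zero => simp
  | succ k ih =>
    rw [Finset.sum_range_succ, pow_succ]
    have h1 : f k * 25 ^ k ≤ 24 * 25 ^ k := Nat.mul_le_mul_right _ (by have := hf k; omega)
    omega

lemma digit_eq (k : ℕ) (f g : ℕ → ℕ) (hf : ∀ d, f d < 25) (hg : ∀ d, g d < 25)
    (h : ∑ d ∈ range k, f d * 25 ^ d = ∑ d ∈ range k, g d * 25 ^ d) :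
    ∀ d < k, f d = g d := by
  induction k with
  | zero => omega
  | succ k ih =>
    rw [Finset.sum_range_succ, Finset.sum_range_succ] at h
    have bf := sum_digits_lt k f hf
    have bg := sum_digits_lt k g hg
    have hpos : 0 < 25 ^ k := by positivity
    have e1 : (∑ d ∈ range k, f d * 25 ^ d + f k * 25 ^ k) / 25 ^ k = f k := by
      rw [mul_comm, Nat.add_mul_div_left _ _ hpos, Nat.div_eq_of_lt bf, Nat.zero_add]
    have e2 : (∑ d ∈ range k, g d * 25 ^ d + g k * 25 ^ k) / 25 ^ k = g k := by
      rw [mul_comm, Nat.add_mul_div_left _ _ hpos, Nat.div_eq_of_lt bg, Nat.zero_add]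
    have htop : f k = g k := by rw [← e1, ← e2, h]
    have hrest : ∑ d ∈ range k, f d * 25 ^ d = ∑ d ∈ range k, g d * 25 ^ d := by
      rw [htop] at h; omega
    intro d hd
    rcases Nat.lt_succ_iff_lt_or_eq.mp hd with h' | h'
    · exact ih hrest d h'
    · subst h'; exact htop


def wB (p : Finset (Fin 4)) : ℕ := ∑ i ∈ p, 2 ^ (i : ℕ)

lemma wB_lt (p : Finset (Fin 4)) (hp : p.card = 2) : wB p < 13 := by revert p; decide
lemma wB_inj (p q : Finset (Fin 4)) (hp : p.card = 2) (hq : q.card = 2) (h : wB p = wB q) :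
    p = q := by revert p q; decide

noncomputable instance subgroupFintype (H : Subgroup (Equiv.Perm (Fin 4))) : Fintype H :=
  Fintype.ofFinite _

variable (H : Subgroup (Equiv.Perm (Fin 4)))

noncomputable def eH (r : Finset (Fin 4)) : ℕ :=
  ∑ h : H, 25 ^ wB (r.image ⇑(h : Equiv.Perm (Fin 4)))

noncomputable def SpH : ℕ := ∑ r : OO 4, eH H r.1

noncomputable def aH (t : Fin 4) : ℕ := ∑ r : OO 4, if t ∈ r.1 then eH H r.1 else 0

noncomputable def muH (r : OO 4) : ℕ := SpH H - eH H r.1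

lemma eH_pos (r : Finset (Fin 4)) : 0 < eH H r :=
  Finset.sum_pos (fun h _ => by positivity) ⟨1, mem_univ _⟩

lemma eH_le_Sp (r : OO 4) : eH H r.1 ≤ SpH H := by
  rw [SpH]
  exact Finset.single_le_sum (f := fun x : OO 4 => eH H x.1) (fun _ _ => Nat.zero_le _)
    (mem_univ r)

lemma eH_mul {g : Equiv.Perm (Fin 4)} (hg : g ∈ H) (r : Finset (Fin 4)) :
    eH H (r.image ⇑g) = eH H r := by
  have key : ∀ h : H, 25 ^ wB ((r.image ⇑g).image ⇑(h : Equiv.Perm (Fin 4)))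
      = 25 ^ wB (r.image ⇑(((Equiv.mulRight (⟨g, hg⟩ : H)) h : H) : Equiv.Perm (Fin 4))) := by
    intro h
    congr 2
    rw [Finset.image_image]
    rfl
  calc eH H (r.image ⇑g)
      = ∑ h : H, 25 ^ wB (r.image ⇑(((Equiv.mulRight (⟨g, hg⟩ : H)) h : H) : Equiv.Perm (Fin 4))) :=
        Finset.sum_congr rfl fun h _ => key h
    _ = eH H r := Equiv.sum_comp (Equiv.mulRight (⟨g, hg⟩ : H))
        (fun h : H => 25 ^ wB (r.image ⇑(h : Equiv.Perm (Fin 4))))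

lemma eH_decomp (q : Finset (Fin 4)) (hq : q.card = 2) :
    eH H q = ∑ d ∈ range 13,
      ((univ.filter fun h : H => wB (q.image ⇑(h : Equiv.Perm (Fin 4))) = d).card) * 25 ^ d := by
  have maps : ∀ h : H, h ∈ (univ : Finset H) →
      wB (q.image ⇑(h : Equiv.Perm (Fin 4))) ∈ range 13 := by
    intro h _
    rw [mem_range]
    exact wB_lt _ (by rw [Finset.card_image_of_injective _ (Equiv.injective _)]; exact hq)
  rw [eH, ← Finset.sum_fiberwise_of_maps_to maps]
  apply Finset.sum_congr rfl
  intro d _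
  trans (∑ _h ∈ univ.filter fun h : H => wB (q.image ⇑(h : Equiv.Perm (Fin 4))) = d, 25 ^ d)
  · exact Finset.sum_congr rfl fun h hh => by rw [(Finset.mem_filter.mp hh).2]
  · rw [Finset.sum_const, smul_eq_mul]

lemma count_lt (q : Finset (Fin 4)) (d : ℕ) :
    ((univ.filter fun h : H => wB (q.image ⇑(h : Equiv.Perm (Fin 4))) = d).card) < 25 := by
  have h1 : ((univ.filter fun h : H => wB (q.image ⇑(h : Equiv.Perm (Fin 4))) = d).card) ≤
      Fintype.card H := by
    rw [← Finset.card_univ]; exact Finset.card_filter_le _ _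
  have h2 : Fintype.card H ≤ Fintype.card (Equiv.Perm (Fin 4)) :=
    Fintype.card_le_of_injective _ Subtype.coe_injective
  have h3 : Fintype.card (Equiv.Perm (Fin 4)) = 24 := by
    rw [Fintype.card_perm, Fintype.card_fin]; norm_num [Nat.factorial]
  omega

lemma eH_orbit_exists {g : Equiv.Perm (Fin 4)} {r : Finset (Fin 4)} (hr : r.card = 2)
    (hgr : eH H (r.image ⇑g) = eH H r) : ∃ h ∈ H, r.image ⇑g = r.image ⇑h := by
  have hs : (r.image ⇑g).card = 2 := by
    rw [Finset.card_image_of_injective _ (Equiv.injective _)]; exact hr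
  have h1 := eH_decomp H _ hs
  have h2 := eH_decomp H r hr
  rw [hgr, h2] at h1
  have hdig := digit_eq 13 _ _ (fun d => count_lt H r d)
    (fun d => count_lt H (r.image ⇑g) d) h1 (wB (r.image ⇑g)) (wB_lt _ hs)
  have hone : (1 : H) ∈ univ.filter
      fun h : H => wB ((r.image ⇑g).image ⇑(h : Equiv.Perm (Fin 4))) = wB (r.image ⇑g) := by
    simp
  have hpos : 0 < (univ.filter
      fun h : H => wB (r.image ⇑(h : Equiv.Perm (Fin 4))) = wB (r.image ⇑g)).card := by
    rw [hdig]
    exact Finset.card_pos.mpr ⟨1, hone⟩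
  obtain ⟨h, hh⟩ := Finset.card_pos.mp hpos
  rw [Finset.mem_filter] at hh
  refine ⟨(h : Equiv.Perm (Fin 4)), h.2, ?_⟩
  exact (wB_inj _ _ (by rw [Finset.card_image_of_injective _ (Equiv.injective _)]; exact hr)
    hs hh.2).symm

def permOO (σ : Equiv.Perm (Fin 4)) : OO 4 ≃ OO 4 where
  toFun r := ⟨r.1.image ⇑σ, by rw [Finset.card_image_of_injective _ (Equiv.injective _)]; exact r.2⟩
  invFun r := ⟨r.1.image ⇑σ⁻¹, by rw [Finset.card_image_of_injective _ (Equiv.injective _)]; exact r.2⟩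
  left_inv r := by
    apply Subtype.ext
    simp [Finset.image_image, Function.comp_def]
  right_inv r := by
    apply Subtype.ext
    simp [Finset.image_image, Function.comp_def]

lemma mem_image_inv {s : Finset (Fin 4)} {g : Equiv.Perm (Fin 4)} {i : Fin 4} :
    i ∈ s.image ⇑g⁻¹ ↔ g i ∈ s := by
  simp only [Finset.mem_image]
  constructor
  · rintro ⟨a, ha, rfl⟩; simpa using ha
  · intro h; exact ⟨g i, h, by simp⟩

lemma aH_inv {g : Equiv.Perm (Fin 4)} (hg : g ∈ H) (t : Fin 4) :
    aH H (g⁻¹ t) = aH H t := by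
  have : aH H (g⁻¹ t) = ∑ r : OO 4,
      (fun s : OO 4 => if g⁻¹ t ∈ s.1 then eH H s.1 else 0) (permOO g⁻¹ r) :=
    (Equiv.sum_comp (permOO g⁻¹) _).symm
  rw [this, aH]
  apply Finset.sum_congr rfl
  intro r _
  simp only [permOO, Equiv.coe_fn_mk]
  rw [eH_mul H (inv_mem hg)]
  have hiff : (g⁻¹ t ∈ r.1.image ⇑g⁻¹) ↔ t ∈ r.1 := by rw [mem_image_inv]; simp
  simp [hiff]

lemma muH_inv {g : Equiv.Perm (Fin 4)} (hg : g ∈ H) (r : OO 4) :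
    muH H (permOO g⁻¹ r) = muH H r := by
  rw [muH, muH]
  congr 1
  exact eH_mul H (inv_mem hg) r.1

abbrev Jty : Type := (Σ t : Fin 4, Fin (aH H t)) ⊕ (Σ r : OO 4, Fin (muH H r))

def colF : Jty H → Fin 4 → Fin 2
  | Sum.inl ⟨t, _⟩, i => if i = t then 1 else 0
  | Sum.inr ⟨r, _⟩, i => if i ∈ r.1 then 1 else 0

noncomputable def nH : ℕ := Fintype.card (Jty H)

noncomputable def EqJ : Jty H ≃ Fin (nH H) := Fintype.equivFin _

noncomputable def lamH : Fin 4 → Fin (nH H) → Fin 2 := fun i k => colF H ((EqJ H).symm k) i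

-- decide facts
lemma fin2_point (i j t : Fin 4) (hij : i ≠ j) :
    (((if i = t then (1 : Fin 2) else 0) ≠ if j = t then 1 else 0) ↔ (t = i ∨ t = j)) := by
  revert i j t; decide

lemma fin2_pair (i j : Fin 4) (r : Finset (Fin 4)) :
    (((if i ∈ r then (1 : Fin 2) else 0) ≠ if j ∈ r then 1 else 0) ↔ ¬(i ∈ r ↔ j ∈ r)) := by
  by_cases h1 : i ∈ r <;> by_cases h2 : j ∈ r <;> simp [h1, h2]

lemma pair_card (i j : Fin 4) (hij : i ≠ j) : ({i, j} : Finset (Fin 4)).card = 2 := by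
  revert i j; decide

lemma pair_compl_card (i j : Fin 4) (hij : i ≠ j) : (({i, j} : Finset (Fin 4))ᶜ).card = 2 := by
  revert i j; decide

lemma pair_compl_ne (i j : Fin 4) (hij : i ≠ j) :
    (({i, j} : Finset (Fin 4))ᶜ) ≠ ({i, j} : Finset (Fin 4)) := by
  revert i j; decide

lemma middle_fact (i j : Fin 4) (hij : i ≠ j) (r : Finset (Fin 4)) (hr : r.card = 2)
    (h1 : r ≠ {i, j}) (h2 : r ≠ ({i, j} : Finset (Fin 4))ᶜ) :
    (i ∈ r ∧ j ∉ r) ∨ (i ∉ r ∧ j ∈ r) := by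
  revert i j r; decide

lemma ham_eq (i j : Fin 4) (hij : i ≠ j) :
    hammingDist (lamH H i) (lamH H j) = 2 * eH H {i, j} + 4 * SpH H := by
  classical
  have h0 : hammingDist (lamH H i) (lamH H j)
      = ∑ k : Fin (nH H), if lamH H i k ≠ lamH H j k then 1 else 0 := by
    rw [hammingDist, Finset.card_filter]
  have h1 : ∑ k : Fin (nH H), (if lamH H i k ≠ lamH H j k then 1 else 0)
      = ∑ z : Jty H, (if colF H z i ≠ colF H z j then 1 else 0) :=
    Equiv.sum_comp (EqJ H).symm (fun z => if colF H z i ≠ colF H z j then 1 else 0)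
  rw [h0, h1, Fintype.sum_sum_type]
  -- point part
  have hpt : ∑ z : (Σ t : Fin 4, Fin (aH H t)),
      (if colF H (Sum.inl z) i ≠ colF H (Sum.inl z) j then 1 else 0) = aH H i + aH H j := by
    rw [← Finset.univ_sigma_univ, Finset.sum_sigma]
    have : ∀ t : Fin 4, ∑ _x : Fin (aH H t),
        (if colF H (Sum.inl ⟨t, _x⟩) i ≠ colF H (Sum.inl ⟨t, _x⟩) j then 1 else 0)
        = if t = i ∨ t = j then aH H t else 0 := by
      intro t
      have hc : ∀ x : Fin (aH H t),
          (if colF H (Sum.inl ⟨t, x⟩) i ≠ colF H (Sum.inl ⟨t, x⟩) j then (1:ℕ) else 0)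
          = if t = i ∨ t = j then 1 else 0 := by
        intro x
        show (if (if i = t then (1 : Fin 2) else 0) ≠ (if j = t then 1 else 0) then (1:ℕ) else 0) = _
        by_cases h : t = i ∨ t = j
        · rw [if_pos ((fin2_point i j t hij).mpr h), if_pos h]
        · rw [if_neg (fun hne => h ((fin2_point i j t hij).mp hne)), if_neg h]
      rw [Finset.sum_congr rfl fun x _ => hc x, Finset.sum_const, Finset.card_univ,
        Fintype.card_fin, smul_eq_mul]
      by_cases h : t = i ∨ t = j <;> simp [h]
    rw [Finset.sum_congr rfl fun t _ => this t]
    have hmem : ∀ t : Fin 4, (t = i ∨ t = j) ↔ t ∈ ({i, j} : Finset (Fin 4)) := by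
      intro t; simp
    rw [Finset.sum_congr rfl fun t _ => by rw [if_congr (hmem t) rfl rfl]]
    rw [Finset.sum_ite_mem, Finset.univ_inter, Finset.sum_pair hij]
  rw [hpt]
  -- pair part
  have hpr : ∑ z : (Σ r : OO 4, Fin (muH H r)),
      (if colF H (Sum.inr z) i ≠ colF H (Sum.inr z) j then 1 else 0)
      = ∑ r : OO 4, if ¬(i ∈ r.1 ↔ j ∈ r.1) then muH H r else 0 := by
    rw [← Finset.univ_sigma_univ, Finset.sum_sigma]
    apply Finset.sum_congr rfl
    intro r _
    have hc : ∀ x : Fin (muH H r),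
        (if colF H (Sum.inr ⟨r, x⟩) i ≠ colF H (Sum.inr ⟨r, x⟩) j then (1:ℕ) else 0)
        = if ¬(i ∈ r.1 ↔ j ∈ r.1) then 1 else 0 := by
      intro x
      show (if (if i ∈ r.1 then (1 : Fin 2) else 0) ≠ (if j ∈ r.1 then 1 else 0) then (1:ℕ) else 0) = _
      by_cases h : ¬(i ∈ r.1 ↔ j ∈ r.1)
      · rw [if_pos ((fin2_pair i j r.1).mpr h), if_pos h]
      · rw [if_neg (fun hne => h ((fin2_pair i j r.1).mp hne)), if_neg h]
    rw [Finset.sum_congr rfl fun x _ => hc x, Finset.sum_const, Finset.card_univ,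
      Fintype.card_fin, smul_eq_mul]
    by_cases h : ¬(i ∈ r.1 ↔ j ∈ r.1) <;> simp [h]
  rw [hpr]
  -- now the combinatorial identity
  have hab : aH H i + aH H j = ∑ r : OO 4,
      ((if i ∈ r.1 then eH H r.1 else 0) + (if j ∈ r.1 then eH H r.1 else 0)) := by
    rw [Finset.sum_add_distrib]; rfl
  rw [hab, ← Finset.sum_add_distrib]
  set p : OO 4 := ⟨{i, j}, pair_card i j hij⟩ with hp
  set q : OO 4 := ⟨({i, j} : Finset (Fin 4))ᶜ, pair_compl_card i j hij⟩ with hqdef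
  have hpq : q ≠ p := fun h => pair_compl_ne i j hij (congrArg Subtype.val h)
  set T : OO 4 → ℕ := fun r =>
    (if i ∈ r.1 then eH H r.1 else 0) + (if j ∈ r.1 then eH H r.1 else 0)
      + (if ¬(i ∈ r.1 ↔ j ∈ r.1) then muH H r else 0) with hT
  show ∑ r : OO 4, T r = 2 * eH H {i, j} + 4 * SpH H
  rw [Finset.sum_eq_sum_sdiff_singleton_add (Finset.mem_univ p) T]
  have hqmem : q ∈ (univ : Finset (OO 4)) \ {p} := by
    rw [Finset.mem_sdiff]; exact ⟨Finset.mem_univ _, by simp [hpq]⟩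
  rw [Finset.sum_eq_sum_sdiff_singleton_add hqmem T]
  have hTp : T p = 2 * eH H {i, j} := by
    have hi : i ∈ ({i, j} : Finset (Fin 4)) := by simp
    have hj : j ∈ ({i, j} : Finset (Fin 4)) := by simp
    simp only [hT, hp]
    rw [if_pos hi, if_pos hj, if_neg (by simp [hi, hj])]
    ring
  have hTq : T q = 0 := by
    have hi : i ∉ (({i, j} : Finset (Fin 4))ᶜ) := by simp
    have hj : j ∉ (({i, j} : Finset (Fin 4))ᶜ) := by simp
    simp only [hT, hqdef]
    rw [if_neg hi, if_neg hj, if_neg (by simp [hi, hj])]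
  have hmid : ∀ r ∈ ((univ : Finset (OO 4)) \ {p}) \ {q}, T r = SpH H := by
    intro r hr
    rw [Finset.mem_sdiff, Finset.mem_sdiff] at hr
    have hrp : r ≠ p := by simpa using hr.1.2
    have hrq : r ≠ q := by simpa using hr.2
    have h1 : r.1 ≠ {i, j} := fun h => hrp (Subtype.ext h)
    have h2 : r.1 ≠ ({i, j} : Finset (Fin 4))ᶜ := fun h => hrq (Subtype.ext h)
    rcases middle_fact i j hij r.1 r.2 h1 h2 with ⟨ha, hb⟩ | ⟨ha, hb⟩
    · simp only [hT]
      rw [if_pos ha, if_neg hb, if_pos (by simp [ha, hb]), muH]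
      have := eH_le_Sp H r
      omega
    · simp only [hT]
      rw [if_neg ha, if_pos hb, if_pos (by simp [ha, hb]), muH]
      have := eH_le_Sp H r
      omega
  rw [Finset.sum_congr rfl hmid, Finset.sum_const, smul_eq_mul]
  have hcard : (((univ : Finset (OO 4)) \ {p}) \ {q}).card = 4 := by
    rw [Finset.sdiff_singleton_eq_erase, Finset.sdiff_singleton_eq_erase,
      Finset.card_erase_of_mem, Finset.card_erase_of_mem (Finset.mem_univ p),
      Finset.card_univ]
    · have : Fintype.card (OO 4) = 6 := by decide
      rw [this]
    · rw [Finset.mem_erase]; exact ⟨hpq, Finset.mem_univ q⟩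
  rw [hcard, hTp, hTq]
  ring

noncomputable def PsiJ {g : Equiv.Perm (Fin 4)} (hg : g ∈ H) : Jty H ≃ Jty H :=
  Equiv.sumCongr
    (Equiv.sigmaCongr (g⁻¹ : Equiv.Perm (Fin 4)) fun t => finCongr (aH_inv H hg t).symm)
    (Equiv.sigmaCongr (permOO g⁻¹) fun r => finCongr (muH_inv H hg r).symm)

lemma colF_PsiJ {g : Equiv.Perm (Fin 4)} (hg : g ∈ H) (z : Jty H) (i : Fin 4) :
    colF H (PsiJ H hg z) i = colF H z (g i) := by
  rcases z with ⟨t, x⟩ | ⟨r, x⟩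
  · show (if i = g⁻¹ t then (1 : Fin 2) else 0) = if g i = t then 1 else 0
    have hiff : (i = g⁻¹ t) ↔ (g i = t) := by
      constructor
      · intro h; rw [h]; simp
      · intro h; rw [← h]; simp
    rw [if_congr hiff rfl rfl]
  · show (if i ∈ r.1.image ⇑g⁻¹ then (1 : Fin 2) else 0) = if g i ∈ r.1 then 1 else 0
    rw [if_congr mem_image_inv rfl rfl]


end BFC

/-- for every subgroup `H ≤ S₄` closed under the action on `O`, there is a
binary code with exactly 4 codewords such that `Iso(C) = Mon(C) = H`. -/
theorem binary_four_codewords_exists (H : Subgroup (Equiv.Perm (Fin 4)))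
    (hH : ClosedUnder permPair (Oset 4) (H : Set (Equiv.Perm (Fin 4)))) :
    ∃ n : ℕ, 0 < n ∧ ∃ lam : Fin 4 → Fin n → Fin 2, Function.Injective lam ∧
      IsoSet lam = (H : Set (Equiv.Perm (Fin 4))) ∧
      MonSet lam = (H : Set (Equiv.Perm (Fin 4))) := by
  classical
  open BFC in
  have hSp : 0 < SpH H := lt_of_lt_of_le (eH_pos H {0, 1})
    (eH_le_Sp H ⟨{0, 1}, by decide⟩)
  have haH : 0 < aH H 0 := by
    have h1 : (if (0 : Fin 4) ∈ (({0, 1} : Finset (Fin 4))) then eH H {0, 1} else 0) ≤ aH H 0 := by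
      rw [aH]
      exact Finset.single_le_sum
        (f := fun r : OO 4 => if (0 : Fin 4) ∈ r.1 then eH H r.1 else 0)
        (fun _ _ => Nat.zero_le _) (Finset.mem_univ (⟨{0, 1}, by decide⟩ : OO 4))
    rw [if_pos (by simp)] at h1
    exact lt_of_lt_of_le (eH_pos H _) h1
  have hnpos : 0 < nH H :=
    Fintype.card_pos_iff.mpr ⟨Sum.inl ⟨0, ⟨0, haH⟩⟩⟩
  have hIso : IsoSet (lamH H) = (H : Set (Equiv.Perm (Fin 4))) := by
    ext g
    constructor
    · intro hg
      apply hH g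
      intro x hx
      have hx' : x.card = 2 := hx
      obtain ⟨i, j, hij, rfl⟩ := Finset.card_eq_two.mp hx'
      have hd := hg i j
      have hgij : g i ≠ g j := fun h => hij (g.injective h)
      rw [ham_eq H i j hij, ham_eq H (g i) (g j) hgij] at hd
      have him : ({g i, g j} : Finset (Fin 4)) = ({i, j} : Finset (Fin 4)).image ⇑g := by
        rw [Finset.image_insert, Finset.image_singleton]
      rw [him] at hd
      have he : eH H (({i, j} : Finset (Fin 4)).image ⇑g) = eH H {i, j} := by omega
      exact eH_orbit_exists H hx' he
    · intro hg i j
      by_cases hij : i = j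
      · subst hij; rw [hammingDist_self, hammingDist_self]
      · have hgij : g i ≠ g j := fun h => hij (g.injective h)
        rw [ham_eq H _ _ hgij, ham_eq H i j hij]
        have him : ({g i, g j} : Finset (Fin 4)) = ({i, j} : Finset (Fin 4)).image ⇑g := by
          rw [Finset.image_insert, Finset.image_singleton]
        rw [him, eH_mul H hg]
  refine ⟨nH H, hnpos, lamH H, ?_, hIso, ?_⟩
  · intro i j hlam
    by_contra hne
    have hd := ham_eq H i j hne
    rw [hlam, hammingDist_self] at hd
    have := eH_pos H ({i, j} : Finset (Fin 4))
    omega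
  · ext g
    constructor
    · intro hg
      rw [← hIso]
      exact hg.1
    · intro hg
      have hiso : g ∈ IsoSet (lamH H) := by rw [hIso]; exact hg
      refine ⟨hiso, ?_⟩
      set π : Equiv.Perm (Fin (nH H)) := ((EqJ H).symm.trans (PsiJ H hg)).trans (EqJ H) with hπ
      refine ⟨fun a k => a (π k), ⟨π, fun _ => 1, fun a k => (Equiv.Perm.one_apply _).symm⟩, ?_⟩
      intro i
      funext k
      show colF H ((EqJ H).symm (π k)) i = colF H ((EqJ H).symm k) (g i)
      have h1 : (EqJ H).symm (π k) = PsiJ H hg ((EqJ H).symm k) := by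
        rw [hπ]; simp
      rw [h1, colF_PsiJ]
end
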